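/- arXiv:2111.13613 — 7 statements merged into one kernel-verified Lean document; each statement's English description precedes it below -/
import Mathlib

section
/- Let μ be a probability measure on X × {0,1} where (X,d) is a separable metric space, and let ε > 0. Define the adversarial risk R̃_ε(A) := E_{(x,y)∼μ}[sup_{x̃ ∈ B_ε(x)} |1_A(x̃) − y|] for Borel sets A. Then R̃_ε is submodular: R̃_ε(A ∪ B) + R̃_ε(A ∩ B) ≤ R̃_ε(A) + R̃_ε(B) for all Borel sets A, B. -/
open Set Metric MeasureTheory

/-- The adversarial risk `R̃_ε(A) = E_{(x,y)∼μ}[ sup_{xt ∈ B_ε(x)} |1_A(xt) − y| ]`,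
where labels `y ∈ {0,1}` are encoded by `Bool`. -/
noncomputable def advRisk {X : Type*} [MetricSpace X] [MeasurableSpace X]
    (μ : Measure (X × Bool)) (ε : ℝ) (A : Set X) : ℝ :=
  ∫ p, sSup ((fun xt => |A.indicator (fun _ => (1 : ℝ)) xt - (if p.2 then 1 else 0)|) ''
      ball p.1 ε) ∂μ

/-- The event set: on label `true` the ball escapes `S`; on label `false` the ball meets `S`. -/
def advEvent {X : Type*} [MetricSpace X] (ε : ℝ) (S : Set X) : Set (X × Bool) :=
  ({x : X | ¬ ball x ε ⊆ S} ×ˢ {true}) ∪ ({x : X | (ball x ε ∩ S).Nonempty} ×ˢ {false})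

lemma mem_advEvent {X : Type*} [MetricSpace X] (ε : ℝ) (S : Set X) (p : X × Bool) :
    p ∈ advEvent ε S ↔
      (if p.2 then ¬ ball p.1 ε ⊆ S else (ball p.1 ε ∩ S).Nonempty) := by
  obtain ⟨x, b⟩ := p
  cases b <;> simp [advEvent]

lemma sSup_eq_indicator {X : Type*} [MetricSpace X] (ε : ℝ) (hε : 0 < ε) (S : Set X)
    (p : X × Bool) :
    sSup ((fun xt => |S.indicator (fun _ => (1 : ℝ)) xt - (if p.2 then 1 else 0)|) ''
        ball p.1 ε) = (advEvent ε S).indicator (fun _ => (1 : ℝ)) p := by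
  classical
  have hne : (ball p.1 ε).Nonempty := nonempty_ball.mpr hε
  have hbdd : ∀ z : X, |S.indicator (fun _ => (1 : ℝ)) z - (if p.2 then 1 else 0)| ≤ 1 := by
    intro z
    by_cases hz : z ∈ S <;> cases hp : p.2 <;>
      simp [Set.indicator, hz]
  rw [Set.indicator_apply, mem_advEvent]
  cases hp : p.2
  · -- label false : integrand is sup of 1_S over the ball
    simp only [if_false, Bool.false_eq_true]
    by_cases h : (ball p.1 ε ∩ S).Nonempty
    · rw [if_pos h]
      obtain ⟨z, hz, hzS⟩ := h
      apply le_antisymm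
      · apply csSup_le (hne.image _)
        rintro _ ⟨w, _, rfl⟩
        simpa [hp] using hbdd w
      · refine le_csSup ⟨1, ?_⟩ ⟨z, hz, by simp [Set.indicator_of_mem hzS, hp]⟩
        rintro _ ⟨w, _, rfl⟩
        simpa [hp] using hbdd w
    · rw [if_neg h]
      have himg : (fun xt => |S.indicator (fun _ => (1 : ℝ)) xt - 0|) ''
          ball p.1 ε = {0} := by
        apply Subset.antisymm
        · rintro _ ⟨w, hw, rfl⟩
          have hwS : w ∉ S := fun hwS => h ⟨w, hw, hwS⟩
          simp [Set.indicator_of_notMem hwS]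
        · rintro _ rfl
          obtain ⟨w, hw⟩ := hne
          have hwS : w ∉ S := fun hwS => h ⟨w, hw, hwS⟩
          exact ⟨w, hw, by simp [Set.indicator_of_notMem hwS]⟩
      rw [himg, csSup_singleton]
  · -- label true : integrand is sup of 1 - 1_S over the ball
    simp only [if_true]
    by_cases h : ball p.1 ε ⊆ S
    · rw [if_neg (not_not_intro h)]
      have himg : (fun xt => |S.indicator (fun _ => (1 : ℝ)) xt - 1|) ''
          ball p.1 ε = {0} := by
        apply Subset.antisymm
        · rintro _ ⟨w, hw, rfl⟩
          simp [Set.indicator_of_mem (h hw)]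
        · rintro _ rfl
          obtain ⟨w, hw⟩ := hne
          exact ⟨w, hw, by simp [Set.indicator_of_mem (h hw)]⟩
      rw [himg, csSup_singleton]
    · rw [if_pos h]
      obtain ⟨z, hz, hzS⟩ := not_subset.mp h
      apply le_antisymm
      · apply csSup_le (hne.image _)
        rintro _ ⟨w, _, rfl⟩
        simpa [hp] using hbdd w
      · refine le_csSup ⟨1, ?_⟩ ⟨z, hz, by simp [Set.indicator_of_notMem hzS, hp]⟩
        rintro _ ⟨w, _, rfl⟩
        simpa [hp] using hbdd w

lemma measurableSet_advEvent {X : Type*} [MetricSpace X] [MeasurableSpace X] [BorelSpace X]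
    (ε : ℝ) (S : Set X) : MeasurableSet (advEvent ε S) := by
  have h1 : {x : X | (ball x ε ∩ S).Nonempty} = Metric.thickening ε S := by
    ext x
    simp only [Metric.mem_thickening_iff, Set.mem_setOf_eq, Set.Nonempty]
    constructor
    · rintro ⟨z, hz, hzS⟩; exact ⟨z, hzS, by rwa [dist_comm, ← mem_ball]⟩
    · rintro ⟨z, hzS, hd⟩; exact ⟨z, by rwa [mem_ball, dist_comm], hzS⟩
  have h2 : {x : X | ¬ ball x ε ⊆ S} = Metric.thickening ε Sᶜ := by
    ext x
    simp only [Metric.mem_thickening_iff, Set.mem_setOf_eq, not_subset]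
    constructor
    · rintro ⟨z, hz, hzS⟩; exact ⟨z, hzS, by rwa [dist_comm, ← mem_ball]⟩
    · rintro ⟨z, hzS, hd⟩; exact ⟨z, by rwa [mem_ball, dist_comm], hzS⟩
  apply MeasurableSet.union
  · exact ((h2 ▸ (Metric.isOpen_thickening).measurableSet).prod (measurableSet_singleton true))
  · exact ((h1 ▸ (Metric.isOpen_thickening).measurableSet).prod (measurableSet_singleton false))

theorem advRisk_submodular {X : Type*} [MetricSpace X] [MeasurableSpace X] [BorelSpace X]
    [TopologicalSpace.SeparableSpace X]
    (μ : Measure (X × Bool)) [IsProbabilityMeasure μ] (ε : ℝ) (hε : 0 < ε)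
    (A B : Set X) (hA : MeasurableSet A) (hB : MeasurableSet B) :
    advRisk μ ε (A ∪ B) + advRisk μ ε (A ∩ B) ≤ advRisk μ ε A + advRisk μ ε B := by
  have hrisk : ∀ S : Set X, advRisk μ ε S
      = ∫ p, (advEvent ε S).indicator (fun _ => (1 : ℝ)) p ∂μ := by
    intro S
    unfold advRisk
    congr 1
    funext p
    exact sSup_eq_indicator ε hε S p
  have hint : ∀ S : Set X,
      Integrable ((advEvent ε S).indicator (fun _ => (1 : ℝ))) μ :=
    fun S => (integrable_const (1 : ℝ)).indicator (measurableSet_advEvent ε S)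
  have hptwise : ∀ p : X × Bool,
      (advEvent ε (A ∪ B)).indicator (fun _ => (1 : ℝ)) p
        + (advEvent ε (A ∩ B)).indicator (fun _ => (1 : ℝ)) p
      ≤ (advEvent ε A).indicator (fun _ => (1 : ℝ)) p
        + (advEvent ε B).indicator (fun _ => (1 : ℝ)) p := by
    intro p
    classical
    simp only [Set.indicator_apply, mem_advEvent]
    cases hp : p.2
    · simp only [Bool.false_eq_true, if_false]
      by_cases hAb : (ball p.1 ε ∩ A).Nonempty <;>
      by_cases hBb : (ball p.1 ε ∩ B).Nonempty
      · have h1 : (ball p.1 ε ∩ (A ∪ B)).Nonempty := by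
          obtain ⟨z, hz, hzA⟩ := hAb; exact ⟨z, hz, Or.inl hzA⟩
        simp [h1, hAb, hBb]
        by_cases h2 : (ball p.1 ε ∩ (A ∩ B)).Nonempty <;> simp [h2]
      · have h1 : (ball p.1 ε ∩ (A ∪ B)).Nonempty := by
          obtain ⟨z, hz, hzA⟩ := hAb; exact ⟨z, hz, Or.inl hzA⟩
        have h2 : ¬ (ball p.1 ε ∩ (A ∩ B)).Nonempty := by
          rintro ⟨z, hz, hzA, hzB⟩; exact hBb ⟨z, hz, hzB⟩
        simp [h1, h2, hAb, hBb]
      · have h1 : (ball p.1 ε ∩ (A ∪ B)).Nonempty := by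
          obtain ⟨z, hz, hzB⟩ := hBb; exact ⟨z, hz, Or.inr hzB⟩
        have h2 : ¬ (ball p.1 ε ∩ (A ∩ B)).Nonempty := by
          rintro ⟨z, hz, hzA, hzB⟩; exact hAb ⟨z, hz, hzA⟩
        simp [h1, h2, hAb, hBb]
      · have h1 : ¬ (ball p.1 ε ∩ (A ∪ B)).Nonempty := by
          rintro ⟨z, hz, hzA | hzB⟩
          · exact hAb ⟨z, hz, hzA⟩
          · exact hBb ⟨z, hz, hzB⟩
        have h2 : ¬ (ball p.1 ε ∩ (A ∩ B)).Nonempty := by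
          rintro ⟨z, hz, hzA, hzB⟩; exact hAb ⟨z, hz, hzA⟩
        simp [h1, h2, hAb, hBb]
    · simp only [if_true]
      by_cases hAb : ball p.1 ε ⊆ A <;> by_cases hBb : ball p.1 ε ⊆ B
      · have h1 : ball p.1 ε ⊆ A ∪ B := fun z hz => Or.inl (hAb hz)
        have h2 : ball p.1 ε ⊆ A ∩ B := fun z hz => ⟨hAb hz, hBb hz⟩
        simp [h1, h2, hAb, hBb]
      · have h1 : ball p.1 ε ⊆ A ∪ B := fun z hz => Or.inl (hAb hz)
        have h2 : ¬ ball p.1 ε ⊆ A ∩ B := fun h => hBb fun z hz => (h hz).2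
        simp [h1, h2, hAb, hBb]
      · have h1 : ball p.1 ε ⊆ A ∪ B := fun z hz => Or.inr (hBb hz)
        have h2 : ¬ ball p.1 ε ⊆ A ∩ B := fun h => hAb fun z hz => (h hz).1
        simp [h1, h2, hAb, hBb]
      · have h2 : ¬ ball p.1 ε ⊆ A ∩ B := fun h => hAb fun z hz => (h hz).1
        by_cases h1 : ball p.1 ε ⊆ A ∪ B <;> simp [h1, h2, hAb, hBb]
  rw [hrisk (A ∪ B), hrisk (A ∩ B), hrisk A, hrisk B,
    ← integral_add (hint (A ∪ B)) (hint (A ∩ B)), ← integral_add (hint A) (hint B)]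
  exact integral_mono ((hint (A ∪ B)).add (hint (A ∩ B))) ((hint A).add (hint B)) hptwise
end

section
/- If A and B are both minimizers of the adversarial risk R̃_ε over Borel subsets of X, then A ∪ B and A ∩ B are also minimizers of R̃_ε. -/
open Set Metric MeasureTheory

section aux
set_option linter.unusedSectionVars false
variable {X : Type*} [MetricSpace X]

lemma abs_ind (C : Set X) (b : Bool) (xt : X) :
    |C.indicator (fun _ => (1 : ℝ)) xt - (if b then 1 else 0)| =
      (cond b Cᶜ C).indicator (fun _ => (1 : ℝ)) xt := by
  cases b <;> by_cases h : xt ∈ C <;> simp [Set.indicator, h]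

lemma sSup_ind (C : Set X) (x : X) {ε : ℝ} (hε : 0 < ε) :
    sSup ((fun xt => C.indicator (fun _ => (1 : ℝ)) xt) '' ball x ε) =
      (thickening ε C).indicator (fun _ => (1 : ℝ)) x := by
  by_cases h : x ∈ thickening ε C
  · rw [Set.indicator_of_mem h]
    rw [mem_thickening_iff] at h
    obtain ⟨z, hz, hd⟩ := h
    apply le_antisymm
    · apply csSup_le ((nonempty_ball.2 hε).image _)
      rintro y ⟨w, -, rfl⟩
      by_cases hw : w ∈ C <;> simp [Set.indicator, hw]
    · apply le_csSup
      · refine ⟨1, ?_⟩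
        rintro y ⟨w, -, rfl⟩
        by_cases hw : w ∈ C <;> simp [Set.indicator, hw]
      · exact ⟨z, by rwa [mem_ball, dist_comm], by simp [Set.indicator, hz]⟩
  · rw [Set.indicator_of_notMem h]
    have : (fun xt => C.indicator (fun _ => (1 : ℝ)) xt) '' ball x ε = {0} := by
      apply Subset.antisymm
      · rintro y ⟨w, hw, rfl⟩
        have hw' : w ∉ C := fun hc =>
          h (mem_thickening_iff.2 ⟨w, hc, by rw [dist_comm]; exact mem_ball.1 hw⟩)
        simp [Set.indicator, hw']
      · rintro y rfl
        have hne : (ball x ε).Nonempty := nonempty_ball.2 hε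
        obtain ⟨w, hw⟩ := hne
        have hw' : w ∉ C := fun hc =>
          h (mem_thickening_iff.2 ⟨w, hc, by rw [dist_comm]; exact mem_ball.1 hw⟩)
        exact ⟨w, hw, by simp [Set.indicator, hw']⟩
    rw [this, csSup_singleton]
end aux

section main
set_option linter.unusedSectionVars false
variable {X : Type*} [MetricSpace X] [MeasurableSpace X] [BorelSpace X]

/-- the set whose indicator is the integrand -/
def advSet (ε : ℝ) (C : Set X) : Set (X × Bool) :=
  {p | p.1 ∈ thickening ε (cond p.2 Cᶜ C)}

lemma advSet_meas (ε : ℝ) (C : Set X) : MeasurableSet (advSet ε C) := by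
  have : advSet ε C = (Prod.fst ⁻¹' thickening ε C ∩ Prod.snd ⁻¹' {false}) ∪
      (Prod.fst ⁻¹' thickening ε Cᶜ ∩ Prod.snd ⁻¹' {true}) := by
    ext ⟨x, b⟩; cases b <;> simp [advSet]
  rw [this]
  exact ((isOpen_thickening.measurableSet.preimage measurable_fst).inter
      ((MeasurableSet.singleton false).preimage measurable_snd)).union
    ((isOpen_thickening.measurableSet.preimage measurable_fst).inter
      ((MeasurableSet.singleton true).preimage measurable_snd))

lemma advRisk_eq (μ : Measure (X × Bool)) {ε : ℝ} (hε : 0 < ε) (C : Set X) :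
    advRisk μ ε C = ∫ p, (advSet ε C).indicator (fun _ => (1 : ℝ)) p ∂μ := by
  unfold advRisk
  congr 1
  funext p
  have : (fun xt => |C.indicator (fun _ => (1 : ℝ)) xt - (if p.2 then 1 else 0)|) =
      fun xt => (cond p.2 Cᶜ C).indicator (fun _ => (1 : ℝ)) xt := by
    funext xt; exact abs_ind C p.2 xt
  rw [this, sSup_ind _ _ hε]
  simp [advSet, Set.indicator]
  congr 1

lemma advInt (μ : Measure (X × Bool)) [IsProbabilityMeasure μ] (ε : ℝ) (C : Set X) :
    Integrable ((advSet ε C).indicator (fun _ => (1 : ℝ))) μ :=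
  (integrable_const (1 : ℝ)).indicator (advSet_meas ε C)

lemma pointwise_submod {ε : ℝ} (S T : Set X) (p : X × Bool) :
    (advSet ε (S ∪ T)).indicator (fun _ => (1 : ℝ)) p +
      (advSet ε (S ∩ T)).indicator (fun _ => (1 : ℝ)) p ≤
    (advSet ε S).indicator (fun _ => (1 : ℝ)) p +
      (advSet ε T).indicator (fun _ => (1 : ℝ)) p := by
  obtain ⟨x, b⟩ := p
  cases b
  · simp only [advSet, Set.indicator, mem_setOf_eq, Set.mem_ofPred_eq, Bool.cond_false]
    simp only [cond_false]
    have h1 : x ∈ thickening ε (S ∪ T) ↔ x ∈ thickening ε S ∨ x ∈ thickening ε T := by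
      rw [thickening_union]; exact mem_union _ _ _
    have h2 : x ∈ thickening ε (S ∩ T) → x ∈ thickening ε S ∧ x ∈ thickening ε T :=
      fun h => ⟨thickening_subset_of_subset ε inter_subset_left h,
        thickening_subset_of_subset ε inter_subset_right h⟩
    by_cases hU : x ∈ thickening ε (S ∪ T) <;> by_cases hI : x ∈ thickening ε (S ∩ T) <;> by_cases hS : x ∈ thickening ε S <;> by_cases hT : x ∈ thickening ε T <;> simp only [hU, hI, hS, hT, if_true, if_false, if_pos, if_neg, not_false_eq_true] <;> norm_num <;> tauto
  · simp only [advSet, Set.indicator, mem_setOf_eq, Set.mem_ofPred_eq, Bool.cond_true]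
    simp only [cond_true]
    have h1 : x ∈ thickening ε (S ∩ T)ᶜ ↔ x ∈ thickening ε Sᶜ ∨ x ∈ thickening ε Tᶜ := by
      rw [compl_inter, thickening_union]; exact mem_union _ _ _
    have h2 : x ∈ thickening ε (S ∪ T)ᶜ → x ∈ thickening ε Sᶜ ∧ x ∈ thickening ε Tᶜ := by
      rw [compl_union]
      exact fun h => ⟨thickening_subset_of_subset ε inter_subset_left h,
        thickening_subset_of_subset ε inter_subset_right h⟩
    by_cases hU : x ∈ thickening ε (S ∪ T)ᶜ <;> by_cases hI : x ∈ thickening ε (S ∩ T)ᶜ <;> by_cases hS : x ∈ thickening ε Sᶜ <;> by_cases hT : x ∈ thickening ε Tᶜ <;> simp only [hU, hI, hS, hT, if_true, if_false, if_pos, if_neg, not_false_eq_true] <;> norm_num <;> tauto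

lemma submod (μ : Measure (X × Bool)) [IsProbabilityMeasure μ] {ε : ℝ} (hε : 0 < ε)
    (S T : Set X) :
    advRisk μ ε (S ∪ T) + advRisk μ ε (S ∩ T) ≤ advRisk μ ε S + advRisk μ ε T := by
  rw [advRisk_eq μ hε, advRisk_eq μ hε, advRisk_eq μ hε, advRisk_eq μ hε,
    ← integral_add (advInt μ ε (S ∪ T)) (advInt μ ε (S ∩ T)),
    ← integral_add (advInt μ ε S) (advInt μ ε T)]
  exact integral_mono ((advInt μ ε (S ∪ T)).add (advInt μ ε (S ∩ T)))
    ((advInt μ ε S).add (advInt μ ε T)) (pointwise_submod S T)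
end main

theorem union_inter_minimizers {X : Type*} [MetricSpace X] [MeasurableSpace X] [BorelSpace X]
    [TopologicalSpace.SeparableSpace X]
    (μ : Measure (X × Bool)) [IsProbabilityMeasure μ] (ε : ℝ) (hε : 0 < ε)
    (A B : Set X) (hA : MeasurableSet A) (hB : MeasurableSet B)
    (hAmin : ∀ C : Set X, MeasurableSet C → advRisk μ ε A ≤ advRisk μ ε C)
    (hBmin : ∀ C : Set X, MeasurableSet C → advRisk μ ε B ≤ advRisk μ ε C) :
    (∀ C : Set X, MeasurableSet C → advRisk μ ε (A ∪ B) ≤ advRisk μ ε C) ∧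
    (∀ C : Set X, MeasurableSet C → advRisk μ ε (A ∩ B) ≤ advRisk μ ε C) := by
  have hsub := submod μ hε A B
  have h1 := hAmin (A ∪ B) (hA.union hB)
  have h2 := hAmin (A ∩ B) (hA.inter hB)
  have h3 := hBmin A hA
  have hU : advRisk μ ε (A ∪ B) = advRisk μ ε A := by linarith
  have hI : advRisk μ ε (A ∩ B) = advRisk μ ε A := by linarith
  exact ⟨fun C hC => hU ▸ hAmin C hC, fun C hC => hI ▸ hAmin C hC⟩
end

section
/- For any Borel set B ⊆ X, the adversarial risk decomposes as E_{(x,y)∼μ}[sup_{x̃∈B_ε(x)} |1_B(x̃) − y|] = E_{(x,y)∼μ}[|1_B(x) − y|] + ε·P̃er_ε(B;μ), where P̃er_ε(B;μ) := (w₀/ε)∫_X (sup_{x̃∈B_ε(x)} 1_B(x̃) − 1_B(x)) dρ₀(x) + (w₁/ε)∫_X (1_B(x) − inf_{x̃∈B_ε(x)} 1_B(x̃)) dρ₁(x). -/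
open Set Metric MeasureTheory

private lemma sSup_indicator_ball {X : Type*} [MetricSpace X] (ε : ℝ) (hε : 0 < ε)
    (A : Set X) (x : X) :
    sSup (A.indicator (fun _ => (1 : ℝ)) '' ball x ε) =
      (thickening ε A).indicator (fun _ => (1 : ℝ)) x := by
  have hne : (ball x ε).Nonempty := ⟨x, mem_ball_self hε⟩
  have hbdd : BddAbove (A.indicator (fun _ => (1 : ℝ)) '' ball x ε) := by
    refine ⟨1, ?_⟩
    rintro t ⟨y, -, rfl⟩
    by_cases h : y ∈ A <;> simp [Set.indicator, h]
  by_cases hx : x ∈ thickening ε A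
  · obtain ⟨z, hz, hdist⟩ := mem_thickening_iff.mp hx
    have hzball : z ∈ ball x ε := by
      rw [mem_ball, dist_comm]; exact hdist
    have h1 : (1 : ℝ) ∈ A.indicator (fun _ => (1 : ℝ)) '' ball x ε :=
      ⟨z, hzball, by simp [Set.indicator_of_mem hz]⟩
    rw [Set.indicator_of_mem hx]
    refine le_antisymm (csSup_le (hne.image _) ?_) (le_csSup hbdd h1)
    rintro t ⟨y, -, rfl⟩
    by_cases h : y ∈ A <;> simp [Set.indicator, h]
  · have hxA : x ∉ A := fun h => hx (self_subset_thickening hε A h)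
    have h0 : (0 : ℝ) ∈ A.indicator (fun _ => (1 : ℝ)) '' ball x ε :=
      ⟨x, mem_ball_self hε, by simp [Set.indicator_of_notMem hxA]⟩
    rw [Set.indicator_of_notMem hx]
    refine le_antisymm (csSup_le (hne.image _) ?_) (le_csSup hbdd h0)
    rintro t ⟨y, hy, rfl⟩
    have hyA : y ∉ A := by
      intro h
      exact hx (mem_thickening_iff.mpr ⟨y, h, by rw [← mem_ball']; exact hy⟩)
    simp [Set.indicator_of_notMem hyA]

private lemma sInf_indicator_ball {X : Type*} [MetricSpace X] (ε : ℝ) (hε : 0 < ε)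
    (A : Set X) (x : X) :
    sInf (A.indicator (fun _ => (1 : ℝ)) '' ball x ε) =
      1 - (thickening ε Aᶜ).indicator (fun _ => (1 : ℝ)) x := by
  have hne : (ball x ε).Nonempty := ⟨x, mem_ball_self hε⟩
  have hbdd : BddBelow (A.indicator (fun _ => (1 : ℝ)) '' ball x ε) := by
    refine ⟨0, ?_⟩
    rintro t ⟨y, -, rfl⟩
    by_cases h : y ∈ A <;> simp [Set.indicator, h]
  by_cases hx : x ∈ thickening ε Aᶜ
  · obtain ⟨z, hz, hdist⟩ := mem_thickening_iff.mp hx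
    have hzball : z ∈ ball x ε := by
      rw [mem_ball, dist_comm]; exact hdist
    have h0 : (0 : ℝ) ∈ A.indicator (fun _ => (1 : ℝ)) '' ball x ε :=
      ⟨z, hzball, by simp [Set.indicator_of_notMem hz]⟩
    rw [Set.indicator_of_mem hx]
    refine le_antisymm (by simpa using csInf_le hbdd h0) (le_csInf (hne.image _) ?_)
    rintro t ⟨y, -, rfl⟩
    by_cases h : y ∈ A <;> simp [Set.indicator, h]
  · have hxA : x ∈ A := by
      by_contra h
      exact hx (self_subset_thickening hε Aᶜ h)
    have h1 : (1 : ℝ) ∈ A.indicator (fun _ => (1 : ℝ)) '' ball x ε :=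
      ⟨x, mem_ball_self hε, by simp [Set.indicator_of_mem hxA]⟩
    rw [Set.indicator_of_notMem hx]
    refine le_antisymm (by simpa using csInf_le hbdd h1) (le_csInf (hne.image _) ?_)
    rintro t ⟨y, hy, rfl⟩
    have hyA : y ∈ A := by
      by_contra h
      exact hx (mem_thickening_iff.mpr ⟨y, h, by rw [← mem_ball']; exact hy⟩)
    simp [Set.indicator_of_mem hyA]

theorem advRisk_eq_risk_add_preperimeter {X : Type*} [MetricSpace X] [MeasurableSpace X]
    [BorelSpace X] [TopologicalSpace.SeparableSpace X]
    (ρ₀ ρ₁ : Measure X) [IsProbabilityMeasure ρ₀] [IsProbabilityMeasure ρ₁]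
    (w₀ w₁ : NNReal) (hw : w₀ + w₁ = 1)
    -- the joint distribution `μ` on `X × {0,1}` with class weights `wᵢ` and conditionals `ρᵢ`
    (μ : Measure (X × Bool))
    (hμ : μ = (w₀ : ENNReal) • (ρ₀.map fun x => (x, false)) +
              (w₁ : ENNReal) • (ρ₁.map fun x => (x, true)))
    (ε : ℝ) (hε : 0 < ε) (B : Set X) (hB : MeasurableSet B) :
    (∫ p, sSup ((fun xt => |B.indicator (fun _ => (1 : ℝ)) xt - (if p.2 then 1 else 0)|) ''
        ball p.1 ε) ∂μ) =
    (∫ p, |B.indicator (fun _ => (1 : ℝ)) p.1 - (if p.2 then 1 else 0)| ∂μ) +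
      ε * (((w₀ : ℝ) / ε) *
            ∫ x, (sSup (B.indicator (fun _ => (1 : ℝ)) '' ball x ε) -
              B.indicator (fun _ => (1 : ℝ)) x) ∂ρ₀ +
          ((w₁ : ℝ) / ε) *
            ∫ x, (B.indicator (fun _ => (1 : ℝ)) x -
              sInf (B.indicator (fun _ => (1 : ℝ)) '' ball x ε)) ∂ρ₁) := by
  classical
  set I : X → ℝ := B.indicator (fun _ => (1 : ℝ)) with hI
  set A₀ : Set X := thickening ε B with hA₀
  set A₁ : Set X := thickening ε Bᶜ with hA₁
  have hA₀m : MeasurableSet A₀ := isOpen_thickening.measurableSet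
  have hA₁m : MeasurableSet A₁ := isOpen_thickening.measurableSet
  -- integrability of indicators
  have hint : ∀ (S : Set X) (ρ : Measure X) [IsProbabilityMeasure ρ], MeasurableSet S →
      Integrable (S.indicator (fun _ => (1 : ℝ))) ρ := by
    intro S ρ _ hS
    exact (integrable_const (1 : ℝ)).indicator hS
  -- pointwise identities
  have habs0 : ∀ y : X, |I y - (0 : ℝ)| = I y := by
    intro y
    by_cases h : y ∈ B <;> simp [hI, Set.indicator, h]
  have habs1 : ∀ y : X, |I y - (1 : ℝ)| = Bᶜ.indicator (fun _ => (1 : ℝ)) y := by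
    intro y
    by_cases h : y ∈ B <;> simp [hI, Set.indicator, h, abs_of_nonpos]
  have hsup0 : ∀ x : X, sSup ((fun xt => |I xt - (0 : ℝ)|) '' ball x ε)
      = A₀.indicator (fun _ => (1 : ℝ)) x := by
    intro x
    have : (fun xt => |I xt - (0 : ℝ)|) = B.indicator (fun _ => (1 : ℝ)) := by
      funext y; exact habs0 y
    rw [this]
    exact sSup_indicator_ball ε hε B x
  have hsup1 : ∀ x : X, sSup ((fun xt => |I xt - (1 : ℝ)|) '' ball x ε)
      = A₁.indicator (fun _ => (1 : ℝ)) x := by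
    intro x
    have : (fun xt => |I xt - (1 : ℝ)|) = Bᶜ.indicator (fun _ => (1 : ℝ)) := by
      funext y; exact habs1 y
    rw [this]
    exact sSup_indicator_ball ε hε Bᶜ x
  have hsupI : ∀ x : X, sSup (I '' ball x ε) = A₀.indicator (fun _ => (1 : ℝ)) x := fun x =>
    sSup_indicator_ball ε hε B x
  have hinfI : ∀ x : X, sInf (I '' ball x ε)
      = 1 - A₁.indicator (fun _ => (1 : ℝ)) x := fun x => sInf_indicator_ball ε hε B x
  -- splitting the μ-integral
  have hsplit : ∀ g : X × Bool → ℝ,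
      Integrable (fun x => g (x, false)) ρ₀ → Integrable (fun x => g (x, true)) ρ₁ →
      ∫ p, g p ∂μ = (w₀ : ℝ) * ∫ x, g (x, false) ∂ρ₀ + (w₁ : ℝ) * ∫ x, g (x, true) ∂ρ₁ := by
    intro g hg0 hg1
    have he0 : MeasurableEmbedding (fun x : X => (x, false)) :=
      measurableEmbedding_prod_mk_right false
    have he1 : MeasurableEmbedding (fun x : X => (x, true)) :=
      measurableEmbedding_prod_mk_right true
    have hm0 : ∫ p, g p ∂(ρ₀.map fun x => (x, false)) = ∫ x, g (x, false) ∂ρ₀ :=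
      he0.integral_map _
    have hm1 : ∫ p, g p ∂(ρ₁.map fun x => (x, true)) = ∫ x, g (x, true) ∂ρ₁ :=
      he1.integral_map _
    have hig0 : Integrable g (((w₀ : ENNReal)) • (ρ₀.map fun x => (x, false))) := by
      refine Integrable.smul_measure ?_ (by simp)
      rw [he0.integrable_map_iff]; exact hg0
    have hig1 : Integrable g (((w₁ : ENNReal)) • (ρ₁.map fun x => (x, true))) := by
      refine Integrable.smul_measure ?_ (by simp)
      rw [he1.integrable_map_iff]; exact hg1
    rw [hμ, integral_add_measure hig0 hig1, integral_smul_measure, integral_smul_measure,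
      hm0, hm1]
    simp
  -- compute LHS integral
  have hL : (∫ p, sSup ((fun xt => |I xt - (if p.2 then 1 else 0 : ℝ)|) '' ball p.1 ε) ∂μ)
      = (w₀ : ℝ) * ∫ x, A₀.indicator (fun _ => (1 : ℝ)) x ∂ρ₀
        + (w₁ : ℝ) * ∫ x, A₁.indicator (fun _ => (1 : ℝ)) x ∂ρ₁ := by
    have hfun : (fun p : X × Bool =>
        sSup ((fun xt => |I xt - (if p.2 then 1 else 0 : ℝ)|) '' ball p.1 ε))
        = fun p : X × Bool => if p.2 then A₁.indicator (fun _ => (1 : ℝ)) p.1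
            else A₀.indicator (fun _ => (1 : ℝ)) p.1 := by
      funext p
      rcases p with ⟨x, b⟩
      cases b
      · simpa using hsup0 x
      · simpa using hsup1 x
    rw [hfun, hsplit _ (by simpa using hint A₀ ρ₀ hA₀m) (by simpa using hint A₁ ρ₁ hA₁m)]
    simp
  -- compute risk integral
  have hR : (∫ p, |I p.1 - (if p.2 then 1 else 0 : ℝ)| ∂μ)
      = (w₀ : ℝ) * ∫ x, I x ∂ρ₀
        + (w₁ : ℝ) * ∫ x, Bᶜ.indicator (fun _ => (1 : ℝ)) x ∂ρ₁ := by
    have hfun : (fun p : X × Bool => |I p.1 - (if p.2 then 1 else 0 : ℝ)|)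
        = fun p : X × Bool => if p.2 then Bᶜ.indicator (fun _ => (1 : ℝ)) p.1 else I p.1 := by
      funext p
      rcases p with ⟨x, b⟩
      cases b
      · simpa using habs0 x
      · simpa using habs1 x
    rw [hfun, hsplit _ (by simpa using hint B ρ₀ hB) (by simpa using hint Bᶜ ρ₁ hB.compl)]
    simp
  -- compute the two perimeter integrals
  have hP0 : (∫ x, (sSup (I '' ball x ε) - I x) ∂ρ₀)
      = (∫ x, A₀.indicator (fun _ => (1 : ℝ)) x ∂ρ₀) - ∫ x, I x ∂ρ₀ := by
    have hfun : (fun x => sSup (I '' ball x ε) - I x)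
        = fun x => A₀.indicator (fun _ => (1 : ℝ)) x - I x := by
      funext x; rw [hsupI x]
    rw [hfun, integral_sub (hint A₀ ρ₀ hA₀m) (hint B ρ₀ hB)]
  have hP1 : (∫ x, (I x - sInf (I '' ball x ε)) ∂ρ₁)
      = (∫ x, A₁.indicator (fun _ => (1 : ℝ)) x ∂ρ₁)
        - ∫ x, Bᶜ.indicator (fun _ => (1 : ℝ)) x ∂ρ₁ := by
    have hfun : (fun x => I x - sInf (I '' ball x ε))
        = fun x => A₁.indicator (fun _ => (1 : ℝ)) x - Bᶜ.indicator (fun _ => (1 : ℝ)) x := by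
      funext x
      rw [hinfI x]
      by_cases h : x ∈ B <;> simp [hI, Set.indicator, h] <;> ring
    rw [hfun, integral_sub (hint A₁ ρ₁ hA₁m) (hint Bᶜ ρ₁ hB.compl)]
  rw [hL, hR, hP0, hP1]
  field_simp
  ring
end

section
/- The nonlocal pre-perimeter is submodular: P̃er_ε(A∪B;μ) + P̃er_ε(A∩B;μ) ≤ P̃er_ε(A;μ) + P̃er_ε(B;μ) for all Borel sets A, B ⊆ X. -/
open Set Metric MeasureTheory

namespace PrePerAux
variable {X : Type*} [MetricSpace X]

def supSet (ε : ℝ) (A : Set X) : Set X := Aᶜ ∩ {x | (ball x ε ∩ A).Nonempty}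

lemma supSet_eq (ε : ℝ) (A : Set X) :
    supSet ε A = Aᶜ ∩ ⋃ a ∈ A, ball a ε := by
  ext x
  simp only [supSet, mem_inter_iff, mem_setOf_eq, mem_iUnion, mem_ball, Set.Nonempty,
    mem_inter_iff, exists_prop, and_congr_right_iff]
  intro _
  constructor
  · rintro ⟨y, hy1, hy2⟩; exact ⟨y, hy2, by rw [dist_comm]; exact hy1⟩
  · rintro ⟨a, ha, hx⟩; exact ⟨a, show dist a x < ε by rw [dist_comm]; exact hx, ha⟩

lemma measurableSet_supSet [MeasurableSpace X] [BorelSpace X] {ε : ℝ} {A : Set X}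
    (hA : MeasurableSet A) : MeasurableSet (supSet ε A) := by
  rw [supSet_eq]
  exact hA.compl.inter (isOpen_biUnion fun _ _ => isOpen_ball).measurableSet

lemma sSup_image_of_nonempty {ε : ℝ} (A : Set X) {x : X} (h : (ball x ε ∩ A).Nonempty) :
    sSup (A.indicator (fun _ => (1 : ℝ)) '' ball x ε) = 1 := by
  obtain ⟨y, hy1, hy2⟩ := h
  have hb : ∀ z ∈ A.indicator (fun _ => (1 : ℝ)) '' ball x ε, z ≤ 1 := by
    rintro z ⟨w, hw, rfl⟩
    by_cases hwA : w ∈ A <;> simp [indicator_apply, hwA]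
  refine le_antisymm (csSup_le ⟨_, ⟨y, hy1, rfl⟩⟩ hb) ?_
  have h1 : (1 : ℝ) ∈ A.indicator (fun _ => (1 : ℝ)) '' ball x ε :=
    ⟨y, hy1, by simp [indicator_apply, hy2]⟩
  exact le_csSup ⟨1, hb⟩ h1

lemma sSup_image_of_empty {ε : ℝ} (hε : 0 < ε) (A : Set X) {x : X}
    (h : ¬(ball x ε ∩ A).Nonempty) :
    sSup (A.indicator (fun _ => (1 : ℝ)) '' ball x ε) = 0 := by
  have himg : A.indicator (fun _ => (1 : ℝ)) '' ball x ε = {0} := by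
    apply Subset.antisymm
    · rintro z ⟨w, hw, rfl⟩
      have hwA : w ∉ A := fun hwA => h ⟨w, hw, hwA⟩
      simp [indicator_apply, hwA]
    · rintro z hz
      have hx : x ∉ A := fun hxA => h ⟨x, mem_ball_self hε, hxA⟩
      refine ⟨x, mem_ball_self hε, ?_⟩
      simp only [mem_singleton_iff] at hz
      simp [indicator_apply, hx, hz]
  rw [himg, csSup_singleton]

lemma sub_sup_eq {ε : ℝ} (hε : 0 < ε) (A : Set X) (x : X) :
    sSup (A.indicator (fun _ => (1 : ℝ)) '' ball x ε) - A.indicator (fun _ => (1 : ℝ)) x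
      = (supSet ε A).indicator (fun _ => (1 : ℝ)) x := by
  by_cases hxA : x ∈ A
  · have hne : (ball x ε ∩ A).Nonempty := ⟨x, mem_ball_self hε, hxA⟩
    have hns : x ∉ supSet ε A := fun hx => hx.1 hxA
    rw [sSup_image_of_nonempty A hne]
    simp [indicator_apply, hxA, hns]
  · by_cases h : (ball x ε ∩ A).Nonempty
    · have hs : x ∈ supSet ε A := ⟨hxA, h⟩
      rw [sSup_image_of_nonempty A h]
      simp [indicator_apply, hxA, hs]
    · have hns : x ∉ supSet ε A := fun hx => h hx.2
      rw [sSup_image_of_empty hε A h]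
      simp [indicator_apply, hxA, hns]

lemma sInf_image_of_nonempty {ε : ℝ} (A : Set X) {x : X} (h : (ball x ε ∩ Aᶜ).Nonempty) :
    sInf (A.indicator (fun _ => (1 : ℝ)) '' ball x ε) = 0 := by
  obtain ⟨y, hy1, hy2⟩ := h
  have hb : ∀ z ∈ A.indicator (fun _ => (1 : ℝ)) '' ball x ε, 0 ≤ z := by
    rintro z ⟨w, hw, rfl⟩
    by_cases hwA : w ∈ A <;> simp [indicator_apply, hwA]
  have h0 : (0 : ℝ) ∈ A.indicator (fun _ => (1 : ℝ)) '' ball x ε :=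
    ⟨y, hy1, by simp [indicator_apply, (Set.mem_compl_iff A y).mp hy2]⟩
  exact le_antisymm (csInf_le ⟨0, hb⟩ h0) (le_csInf ⟨_, h0⟩ hb)

lemma sInf_image_of_empty {ε : ℝ} (hε : 0 < ε) (A : Set X) {x : X}
    (h : ¬(ball x ε ∩ Aᶜ).Nonempty) :
    sInf (A.indicator (fun _ => (1 : ℝ)) '' ball x ε) = 1 := by
  have himg : A.indicator (fun _ => (1 : ℝ)) '' ball x ε = {1} := by
    apply Subset.antisymm
    · rintro z ⟨w, hw, rfl⟩
      have hwA : w ∈ A := by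
        by_contra hwA; exact h ⟨w, hw, hwA⟩
      simp [indicator_apply, hwA]
    · rintro z hz
      have hx : x ∈ A := by
        by_contra hxA; exact h ⟨x, mem_ball_self hε, hxA⟩
      refine ⟨x, mem_ball_self hε, ?_⟩
      simp only [mem_singleton_iff] at hz
      simp [indicator_apply, hx, hz]
  rw [himg, csInf_singleton]

lemma sub_inf_eq {ε : ℝ} (hε : 0 < ε) (A : Set X) (x : X) :
    A.indicator (fun _ => (1 : ℝ)) x - sInf (A.indicator (fun _ => (1 : ℝ)) '' ball x ε)
      = (supSet ε Aᶜ).indicator (fun _ => (1 : ℝ)) x := by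
  by_cases hxA : x ∈ A
  · by_cases h : (ball x ε ∩ Aᶜ).Nonempty
    · have hs : x ∈ supSet ε Aᶜ := ⟨fun hx => hx hxA, h⟩
      rw [sInf_image_of_nonempty A h]
      simp [indicator_apply, hxA, hs]
    · have hns : x ∉ supSet ε Aᶜ := fun hx => h hx.2
      rw [sInf_image_of_empty hε A h]
      simp [indicator_apply, hxA, hns]
  · have hne : (ball x ε ∩ Aᶜ).Nonempty := ⟨x, mem_ball_self hε, hxA⟩
    have hns : x ∉ supSet ε Aᶜ := fun hx => hx.1 (by simpa using hxA)
    rw [sInf_image_of_nonempty A hne]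
    simp [indicator_apply, hxA, hns]

lemma supSet_union_subset {ε : ℝ} (A B : Set X) :
    supSet ε (A ∪ B) ∪ supSet ε (A ∩ B) ⊆ supSet ε A ∪ supSet ε B := by
  rintro x (⟨hx1, y, hy1, hy2⟩ | ⟨hx1, y, hy1, hy2⟩)
  · rw [mem_compl_iff, mem_union, not_or] at hx1
    rcases hy2 with hyA | hyB
    · exact Or.inl ⟨hx1.1, y, hy1, hyA⟩
    · exact Or.inr ⟨hx1.2, y, hy1, hyB⟩
  · rw [mem_compl_iff, mem_inter_iff, not_and_or] at hx1
    rcases hx1 with hxA | hxB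
    · exact Or.inl ⟨hxA, y, hy1, hy2.1⟩
    · exact Or.inr ⟨hxB, y, hy1, hy2.2⟩

lemma supSet_inter_subset {ε : ℝ} (A B : Set X) :
    supSet ε (A ∪ B) ∩ supSet ε (A ∩ B) ⊆ supSet ε A ∩ supSet ε B := by
  rintro x ⟨⟨hx1, -⟩, -, y, hy1, hy2⟩
  rw [mem_compl_iff, mem_union, not_or] at hx1
  exact ⟨⟨hx1.1, y, hy1, hy2.1⟩, ⟨hx1.2, y, hy1, hy2.2⟩⟩

omit [MetricSpace X] in
lemma indicator_submod {P Q R T : Set X} (h1 : P ∪ Q ⊆ R ∪ T) (h2 : P ∩ Q ⊆ R ∩ T) (x : X) :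
    P.indicator (fun _ => (1 : ℝ)) x + Q.indicator (fun _ => (1 : ℝ)) x ≤
      R.indicator (fun _ => (1 : ℝ)) x + T.indicator (fun _ => (1 : ℝ)) x := by
  have hR : (0 : ℝ) ≤ R.indicator (fun _ => (1 : ℝ)) x :=
    indicator_nonneg (fun _ _ => zero_le_one) x
  have hT : (0 : ℝ) ≤ T.indicator (fun _ => (1 : ℝ)) x :=
    indicator_nonneg (fun _ _ => zero_le_one) x
  by_cases hp : x ∈ P <;> by_cases hq : x ∈ Q
  · obtain ⟨hr, ht⟩ := h2 ⟨hp, hq⟩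
    simp [indicator_apply, hp, hq, hr, ht]
  · rcases h1 (Or.inl hp) with h | h <;> simp [indicator_apply, hp, hq, h] <;> linarith
  · rcases h1 (Or.inr hq) with h | h <;> simp [indicator_apply, hp, hq, h] <;> linarith
  · simp [indicator_apply, hp, hq]; linarith

end PrePerAux

/-- The nonlocal pre-perimeter
`P̃er_ε(A;μ) = (w₀/ε)∫(sup_{B_ε(·)}1_A − 1_A)dρ₀ + (w₁/ε)∫(1_A − inf_{B_ε(·)}1_A)dρ₁`. -/
noncomputable def prePerimeter {X : Type*} [MetricSpace X] [MeasurableSpace X]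
    (ρ₀ ρ₁ : Measure X) (w₀ w₁ ε : ℝ) (A : Set X) : ℝ :=
  (w₀ / ε) * ∫ x, (sSup (A.indicator (fun _ => (1 : ℝ)) '' ball x ε) -
      A.indicator (fun _ => (1 : ℝ)) x) ∂ρ₀ +
  (w₁ / ε) * ∫ x, (A.indicator (fun _ => (1 : ℝ)) x -
      sInf (A.indicator (fun _ => (1 : ℝ)) '' ball x ε)) ∂ρ₁

open PrePerAux in
theorem prePerimeter_submodular {X : Type*} [MetricSpace X] [MeasurableSpace X] [BorelSpace X]
    [TopologicalSpace.SeparableSpace X]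
    (ρ₀ ρ₁ : Measure X) [IsProbabilityMeasure ρ₀] [IsProbabilityMeasure ρ₁]
    (w₀ w₁ : ℝ) (hw₀ : 0 ≤ w₀) (hw₁ : 0 ≤ w₁)
    (ε : ℝ) (hε : 0 < ε)
    (A B : Set X) (hA : MeasurableSet A) (hB : MeasurableSet B) :
    prePerimeter ρ₀ ρ₁ w₀ w₁ ε (A ∪ B) + prePerimeter ρ₀ ρ₁ w₀ w₁ ε (A ∩ B) ≤
      prePerimeter ρ₀ ρ₁ w₀ w₁ ε A + prePerimeter ρ₀ ρ₁ w₀ w₁ ε B := by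
  have key : ∀ (μ : Measure X) [IsProbabilityMeasure μ] (P Q R T : Set X),
      MeasurableSet P → MeasurableSet Q → MeasurableSet R → MeasurableSet T →
      P ∪ Q ⊆ R ∪ T → P ∩ Q ⊆ R ∩ T →
      (∫ x, P.indicator (fun _ => (1 : ℝ)) x ∂μ) + (∫ x, Q.indicator (fun _ => (1 : ℝ)) x ∂μ) ≤
      (∫ x, R.indicator (fun _ => (1 : ℝ)) x ∂μ) +
        (∫ x, T.indicator (fun _ => (1 : ℝ)) x ∂μ) := by
    intro μ _ P Q R T hP hQ hR hT h1 h2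
    have iP : Integrable (P.indicator fun _ => (1 : ℝ)) μ := (integrable_const 1).indicator hP
    have iQ : Integrable (Q.indicator fun _ => (1 : ℝ)) μ := (integrable_const 1).indicator hQ
    have iR : Integrable (R.indicator fun _ => (1 : ℝ)) μ := (integrable_const 1).indicator hR
    have iT : Integrable (T.indicator fun _ => (1 : ℝ)) μ := (integrable_const 1).indicator hT
    rw [← integral_add iP iQ, ← integral_add iR iT]
    exact integral_mono (iP.add iQ) (iR.add iT) fun x => indicator_submod h1 h2 x
  have e0 : ∀ C : Set X,
      (∫ x, (sSup (C.indicator (fun _ => (1 : ℝ)) '' ball x ε) -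
        C.indicator (fun _ => (1 : ℝ)) x) ∂ρ₀)
        = ∫ x, (supSet ε C).indicator (fun _ => (1 : ℝ)) x ∂ρ₀ := fun C =>
    integral_congr_ae (Filter.Eventually.of_forall fun x => sub_sup_eq hε C x)
  have e1 : ∀ C : Set X,
      (∫ x, (C.indicator (fun _ => (1 : ℝ)) x -
        sInf (C.indicator (fun _ => (1 : ℝ)) '' ball x ε)) ∂ρ₁)
        = ∫ x, (supSet ε Cᶜ).indicator (fun _ => (1 : ℝ)) x ∂ρ₁ := fun C =>
    integral_congr_ae (Filter.Eventually.of_forall fun x => sub_inf_eq hε C x)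
  simp only [prePerimeter, e0, e1]
  have h₀ := key ρ₀ (supSet ε (A ∪ B)) (supSet ε (A ∩ B)) (supSet ε A) (supSet ε B)
    (measurableSet_supSet (hA.union hB)) (measurableSet_supSet (hA.inter hB))
    (measurableSet_supSet hA) (measurableSet_supSet hB)
    (supSet_union_subset A B) (supSet_inter_subset A B)
  have hu : (A ∪ B)ᶜ = Aᶜ ∩ Bᶜ := compl_union A B
  have hi : (A ∩ B)ᶜ = Aᶜ ∪ Bᶜ := compl_inter A B
  have h₁ := key ρ₁ (supSet ε (A ∪ B)ᶜ) (supSet ε (A ∩ B)ᶜ) (supSet ε Aᶜ) (supSet ε Bᶜ)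
    (measurableSet_supSet (hA.union hB).compl) (measurableSet_supSet (hA.inter hB).compl)
    (measurableSet_supSet hA.compl) (measurableSet_supSet hB.compl)
    (by rw [hu, hi, union_comm (supSet ε (Aᶜ ∩ Bᶜ))]; exact supSet_union_subset Aᶜ Bᶜ)
    (by rw [hu, hi, inter_comm (supSet ε (Aᶜ ∩ Bᶜ))]; exact supSet_inter_subset Aᶜ Bᶜ)
  have c0 : 0 ≤ w₀ / ε := div_nonneg hw₀ hε.le
  have c1 : 0 ≤ w₁ / ε := div_nonneg hw₁ hε.le
  nlinarith [mul_le_mul_of_nonneg_left h₀ c0, mul_le_mul_of_nonneg_left h₁ c1]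
end

section
/- Closing and opening do not increase the adversarial risk: for any Borel set A ⊆ X, R̃_ε(cl_ε(A)) ≤ R̃_ε(A) and R̃_ε(op_ε(A)) ≤ R̃_ε(A). Consequently, if A minimizes R̃_ε over Borel sets then so do cl_ε(A) and op_ε(A). -/
open Set Metric MeasureTheory

/-- The dilation `A^ε = {x : dist(x,A) < ε}`. -/
noncomputable def dilation {X : Type*} [PseudoMetricSpace X] (ε : ℝ) (A : Set X) : Set X :=
  Metric.thickening ε A

/-- The erosion `A^{−ε} = {x : dist(x,Aᶜ) ≥ ε}`. -/
noncomputable def erosion {X : Type*} [PseudoMetricSpace X] (ε : ℝ) (A : Set X) : Set X :=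
  {x | ENNReal.ofReal ε ≤ EMetric.infEdist x Aᶜ}

/-- The closing `cl_ε(A) = (A^ε)^{−ε}`. -/
noncomputable def closing {X : Type*} [PseudoMetricSpace X] (ε : ℝ) (A : Set X) : Set X :=
  erosion ε (dilation ε A)

/-- The opening `op_ε(A) = (A^{−ε})^ε`. -/
noncomputable def opening {X : Type*} [PseudoMetricSpace X] (ε : ℝ) (A : Set X) : Set X :=
  dilation ε (erosion ε A)

/-- The adversarial risk in morphological form
`R̃_ε(A) = w₀ ρ₀(A^ε) + w₁(1 − ρ₁(A^{−ε}))`. -/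
noncomputable def morphRisk {X : Type*} [PseudoMetricSpace X] [MeasurableSpace X]
    (ρ₀ ρ₁ : Measure X) (w₀ w₁ ε : ℝ) (A : Set X) : ℝ :=
  w₀ * (ρ₀ (dilation ε A)).toReal + w₁ * (1 - (ρ₁ (erosion ε A)).toReal)

lemma dilation_mono' {X : Type*} [PseudoMetricSpace X] (ε : ℝ) {A B : Set X} (h : A ⊆ B) :
    dilation ε A ⊆ dilation ε B := Metric.thickening_subset_of_subset ε h

lemma erosion_mono' {X : Type*} [PseudoMetricSpace X] (ε : ℝ) {A B : Set X} (h : A ⊆ B) :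
    erosion ε A ⊆ erosion ε B := fun _ hx =>
  le_trans hx (EMetric.infEdist_anti (compl_subset_compl.2 h))

lemma subset_closing' {X : Type*} [PseudoMetricSpace X] (ε : ℝ) (A : Set X) :
    A ⊆ closing ε A := by
  intro x hx
  simp only [closing, erosion, mem_setOf_eq]
  refine EMetric.le_infEdist.mpr ?_
  intro y hy
  have h1 : ¬ EMetric.infEdist y A < ENNReal.ofReal ε := fun h =>
    hy (Metric.mem_thickening_iff_infEdist_lt.2 h)
  calc ENNReal.ofReal ε ≤ EMetric.infEdist y A := not_lt.1 h1
    _ ≤ edist y x := EMetric.infEdist_le_edist_of_mem hx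
    _ = edist x y := edist_comm _ _

lemma opening_subset' {X : Type*} [PseudoMetricSpace X] (ε : ℝ) (A : Set X) :
    opening ε A ⊆ A := by
  intro x hx
  rw [opening, dilation, Metric.mem_thickening_iff_infEdist_lt] at hx
  obtain ⟨y, hy, hxy⟩ := EMetric.infEdist_lt_iff.1 hx
  by_contra hxA
  have : EMetric.infEdist y Aᶜ ≤ edist y x := EMetric.infEdist_le_edist_of_mem hxA
  have : ENNReal.ofReal ε ≤ edist y x := le_trans hy this
  rw [edist_comm] at this
  exact absurd hxy (not_lt.2 this)

lemma morphRisk_mono {X : Type*} [PseudoMetricSpace X] [MeasurableSpace X]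
    (ρ₀ ρ₁ : Measure X) [IsProbabilityMeasure ρ₀] [IsProbabilityMeasure ρ₁]
    {w₀ w₁ : ℝ} (hw₀ : 0 ≤ w₀) (hw₁ : 0 ≤ w₁) (ε : ℝ) {A B : Set X}
    (h1 : dilation ε B ⊆ dilation ε A) (h2 : erosion ε A ⊆ erosion ε B) :
    morphRisk ρ₀ ρ₁ w₀ w₁ ε B ≤ morphRisk ρ₀ ρ₁ w₀ w₁ ε A := by
  have m0 : (ρ₀ (dilation ε B)).toReal ≤ (ρ₀ (dilation ε A)).toReal :=
    ENNReal.toReal_mono (measure_ne_top _ _) (measure_mono h1)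
  have m1 : (ρ₁ (erosion ε A)).toReal ≤ (ρ₁ (erosion ε B)).toReal :=
    ENNReal.toReal_mono (measure_ne_top _ _) (measure_mono h2)
  unfold morphRisk
  have := mul_le_mul_of_nonneg_left m0 hw₀
  have := mul_le_mul_of_nonneg_left (sub_le_sub_left m1 1) hw₁
  linarith

theorem closing_opening_decrease_risk {X : Type*} [MetricSpace X] [MeasurableSpace X]
    [BorelSpace X]
    (ρ₀ ρ₁ : Measure X) [IsProbabilityMeasure ρ₀] [IsProbabilityMeasure ρ₁]
    (w₀ w₁ : ℝ) (hw₀ : 0 ≤ w₀) (hw₁ : 0 ≤ w₁)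
    (ε : ℝ) (hε : 0 < ε) (A : Set X) (hA : MeasurableSet A) :
    (morphRisk ρ₀ ρ₁ w₀ w₁ ε (closing ε A) ≤ morphRisk ρ₀ ρ₁ w₀ w₁ ε A ∧
      morphRisk ρ₀ ρ₁ w₀ w₁ ε (opening ε A) ≤ morphRisk ρ₀ ρ₁ w₀ w₁ ε A) ∧
    ((∀ C : Set X, MeasurableSet C → morphRisk ρ₀ ρ₁ w₀ w₁ ε A ≤ morphRisk ρ₀ ρ₁ w₀ w₁ ε C) →
      (∀ C : Set X, MeasurableSet C →
        morphRisk ρ₀ ρ₁ w₀ w₁ ε (closing ε A) ≤ morphRisk ρ₀ ρ₁ w₀ w₁ ε C) ∧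
      (∀ C : Set X, MeasurableSet C →
        morphRisk ρ₀ ρ₁ w₀ w₁ ε (opening ε A) ≤ morphRisk ρ₀ ρ₁ w₀ w₁ ε C)) := by
  have hcl : morphRisk ρ₀ ρ₁ w₀ w₁ ε (closing ε A) ≤ morphRisk ρ₀ ρ₁ w₀ w₁ ε A := by
    apply morphRisk_mono ρ₀ ρ₁ hw₀ hw₁ ε
    · exact opening_subset' ε (dilation ε A)
    · exact erosion_mono' ε (subset_closing' ε A)
  have hop : morphRisk ρ₀ ρ₁ w₀ w₁ ε (opening ε A) ≤ morphRisk ρ₀ ρ₁ w₀ w₁ ε A := by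
    apply morphRisk_mono ρ₀ ρ₁ hw₀ hw₁ ε
    · exact dilation_mono' ε (opening_subset' ε A)
    · exact subset_closing' ε (erosion ε A)
  refine ⟨⟨hcl, hop⟩, fun hmin => ⟨fun C hC => le_trans hcl (hmin C hC),
    fun C hC => le_trans hop (hmin C hC)⟩⟩
end

section
/- If (X,d,ν) is a metric measure space with finite measure ν satisfying the Lebesgue differentiation property, and u_k ⇀* u in L^∞(X;ν), then for ν-a.e. x ∈ X and every ε > 0: limsup_k essinf_{ν, B_ε(x)} u_k ≤ u(x) ≤ liminf_k esssup_{ν, B_ε(x)} u_k. -/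
open Set Metric MeasureTheory Filter

/-- Uniform essential bound for a weak-* convergent sequence, via Banach–Steinhaus. -/
lemma weakstar_uniform_bound {X : Type*} [MeasurableSpace X]
    (ν : Measure X) [IsFiniteMeasure ν]
    (uk : ℕ → X → ℝ) (huk_meas : ∀ k, Measurable (uk k))
    (huk_bdd : ∀ k, ∃ C : ℝ, ∀ᵐ x ∂ν, |uk k x| ≤ C)
    (hconv : ∀ φ : X → ℝ, Integrable φ ν →
      ∃ L : ℝ, Tendsto (fun k => ∫ x, uk k x * φ x ∂ν) atTop (nhds L)) :
    ∃ C : ℝ, ∀ k, ∀ᵐ x ∂ν, |uk k x| ≤ C := by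
  classical
  have huk_int : ∀ k, Integrable (uk k) ν := by
    intro k
    obtain ⟨C, hC⟩ := huk_bdd k
    exact (integrable_const C).mono' (huk_meas k).aestronglyMeasurable
      (hC.mono fun x hx => by simpa [Real.norm_eq_abs] using hx)
  have hint : ∀ k (φ : X → ℝ), Integrable φ ν → Integrable (fun x => uk k x * φ x) ν := by
    intro k φ hφ
    obtain ⟨C, hC⟩ := huk_bdd k
    exact hφ.bdd_mul (huk_meas k).aestronglyMeasurable
      (hC.mono fun x hx => by simpa [Real.norm_eq_abs] using hx)
  -- the pairing continuous linear maps on L¹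
  let T : ℕ → (Lp ℝ 1 ν) →L[ℝ] ℝ := fun k =>
    LinearMap.mkContinuous
      { toFun := fun φ => ∫ x, uk k x * φ x ∂ν
        map_add' := by
          intro φ ψ
          have h1 : ∫ x, uk k x * (↑(φ + ψ) : X → ℝ) x ∂ν
              = ∫ x, (uk k x * φ x + uk k x * ψ x) ∂ν := by
            refine integral_congr_ae ?_
            filter_upwards [Lp.coeFn_add φ ψ] with x hx
            rw [hx, Pi.add_apply]; ring
          rw [h1, integral_add (hint k _ (L1.integrable_coeFn φ))
            (hint k _ (L1.integrable_coeFn ψ))]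
        map_smul' := by
          intro c φ
          have h1 : ∫ x, uk k x * (↑(c • φ) : X → ℝ) x ∂ν
              = ∫ x, c * (uk k x * φ x) ∂ν := by
            refine integral_congr_ae ?_
            filter_upwards [Lp.coeFn_smul c φ] with x hx
            simp [hx]; ring
          rw [h1, integral_const_mul]
          simp }
      (max (huk_bdd k).choose 0)
      (by
        intro φ
        have hC := (huk_bdd k).choose_spec
        set Ck := (huk_bdd k).choose with hCk
        have h1 : ‖∫ x, uk k x * φ x ∂ν‖ ≤ ∫ x, ‖uk k x * φ x‖ ∂ν :=
          norm_integral_le_integral_norm _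
        have h2 : ∫ x, ‖uk k x * φ x‖ ∂ν ≤ ∫ x, (max Ck 0) * ‖φ x‖ ∂ν := by
          refine integral_mono_ae (hint k _ (L1.integrable_coeFn φ)).norm
            ((L1.integrable_coeFn φ).norm.const_mul _) ?_
          filter_upwards [hC] with x hx
          rw [norm_mul]
          exact mul_le_mul_of_nonneg_right
            (le_max_of_le_left (by simpa [Real.norm_eq_abs] using hx)) (norm_nonneg _)
        have h3 : ∫ x, (max Ck 0) * ‖φ x‖ ∂ν = (max Ck 0) * ‖φ‖ := by
          rw [integral_const_mul, L1.norm_eq_integral_norm]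
        exact h1.trans (h2.trans_eq h3))
  have hTapp : ∀ k (φ : Lp ℝ 1 ν), T k φ = ∫ x, uk k x * φ x ∂ν := fun _ _ => rfl
  -- pointwise boundedness
  have hpt : ∀ φ : Lp ℝ 1 ν, ∃ C, ∀ k, ‖T k φ‖ ≤ C := by
    intro φ
    obtain ⟨L, hL⟩ := hconv φ (L1.integrable_coeFn φ)
    obtain ⟨C, hC⟩ := hL.norm.bddAbove_range
    exact ⟨C, fun k => by rw [hTapp]; exact hC ⟨k, rfl⟩⟩
  obtain ⟨C', hC'⟩ := banach_steinhaus hpt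
  -- bound on set integrals
  have hset : ∀ k (S : Set X), MeasurableSet S →
      |∫ y in S, uk k y ∂ν| ≤ C' * (ν S).toReal := by
    intro k S hS
    have hf_int : Integrable (S.indicator fun _ => (1 : ℝ)) ν :=
      (integrable_const 1).indicator hS
    set φ : Lp ℝ 1 ν := hf_int.toL1 _ with hφ
    have hcoe : (φ : X → ℝ) =ᵐ[ν] S.indicator fun _ => (1 : ℝ) :=
      Integrable.coeFn_toL1 hf_int
    have hval : T k φ = ∫ y in S, uk k y ∂ν := by
      rw [hTapp, ← integral_indicator hS]
      refine integral_congr_ae ?_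
      filter_upwards [hcoe] with y hy
      rw [hy]
      by_cases h : y ∈ S <;> simp [h]
    have hnorm : ‖φ‖ = (ν S).toReal := by
      rw [L1.norm_eq_integral_norm]
      have : ∫ y, ‖(φ : X → ℝ) y‖ ∂ν = ∫ y, S.indicator (fun _ => (1 : ℝ)) y ∂ν := by
        refine integral_congr_ae ?_
        filter_upwards [hcoe] with y hy
        rw [hy]
        by_cases h : y ∈ S <;> simp [h]
      rw [this, integral_indicator hS, setIntegral_const, smul_eq_mul, mul_one, measureReal_def]
    calc |∫ y in S, uk k y ∂ν| = ‖T k φ‖ := by rw [hval]; rfl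
      _ ≤ ‖T k‖ * ‖φ‖ := (T k).le_opNorm φ
      _ ≤ C' * (ν S).toReal := by
          rw [hnorm]
          exact mul_le_mul_of_nonneg_right (hC' k) ENNReal.toReal_nonneg
  refine ⟨C' + 1, fun k => ?_⟩
  -- upper bound a.e.
  have hup : ν {x | C' + 1 ≤ uk k x} = 0 := by
    set S := {x | C' + 1 ≤ uk k x} with hSdef
    have hS : MeasurableSet S := measurableSet_le measurable_const (huk_meas k)
    by_contra h0
    have ht : 0 < (ν S).toReal := ENNReal.toReal_pos h0 (measure_ne_top ν S)
    have h1 : (C' + 1) * (ν S).toReal ≤ ∫ y in S, uk k y ∂ν := by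
      have := setIntegral_mono_on (integrableOn_const (measure_ne_top ν S))
        ((huk_int k).integrableOn) hS (fun x hx => (hx : C' + 1 ≤ uk k x))
      rwa [setIntegral_const, smul_eq_mul, mul_comm, measureReal_def] at this
    have h2 : ∫ y in S, uk k y ∂ν ≤ C' * (ν S).toReal :=
      (le_abs_self _).trans (hset k S hS)
    have := h1.trans h2
    have := (mul_le_mul_iff_of_pos_right ht).mp this
    linarith
  have hlo : ν {x | uk k x ≤ -(C' + 1)} = 0 := by
    set S := {x | uk k x ≤ -(C' + 1)} with hSdef
    have hS : MeasurableSet S := measurableSet_le (huk_meas k) measurable_const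
    by_contra h0
    have ht : 0 < (ν S).toReal := ENNReal.toReal_pos h0 (measure_ne_top ν S)
    have h1 : ∫ y in S, uk k y ∂ν ≤ -(C' + 1) * (ν S).toReal := by
      have := setIntegral_mono_on ((huk_int k).integrableOn)
        (integrableOn_const (measure_ne_top ν S)) hS
        (fun x hx => (hx : uk k x ≤ -(C' + 1)))
      rwa [setIntegral_const, smul_eq_mul, mul_comm, measureReal_def] at this
    have h2 : -(C' * (ν S).toReal) ≤ ∫ y in S, uk k y ∂ν := (abs_le.mp (hset k S hS)).1
    have := h2.trans h1
    nlinarith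
  have hU := measure_union_null hup hlo
  rw [ae_iff]
  refine measure_mono_null (fun x hx => ?_) hU
  simp only [mem_setOf_eq, not_le] at hx
  simp only [Set.mem_union, mem_setOf_eq]
  rcases lt_abs.mp hx with h | h
  · exact Or.inl h.le
  · exact Or.inr (by linarith)

theorem weakstar_essinf_esssup_bounds {X : Type*} [MetricSpace X] [MeasurableSpace X]
    [BorelSpace X]
    (ν : Measure X) [IsFiniteMeasure ν]
    -- `ν` satisfies the Lebesgue differentiation property
    (hLDP : ∀ f : X → ℝ, Integrable f ν → ∀ᵐ x ∂ν,
      Tendsto (fun r : ℝ => ((ν (ball x r)).toReal)⁻¹ * ∫ y in ball x r, f y ∂ν)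
        (nhdsWithin 0 (Ioi 0)) (nhds (f x)))
    (u : X → ℝ) (uk : ℕ → X → ℝ)
    (hu_meas : Measurable u) (huk_meas : ∀ k, Measurable (uk k))
    -- the functions belong to `L^∞(X;ν)`
    (hu_bdd : ∃ C : ℝ, ∀ᵐ x ∂ν, |u x| ≤ C)
    (huk_bdd : ∀ k, ∃ C : ℝ, ∀ᵐ x ∂ν, |uk k x| ≤ C)
    -- weak-* convergence `uk ⇀* u` in `L^∞(X;ν)`
    (hweak : ∀ φ : X → ℝ, Integrable φ ν →
      Tendsto (fun k => ∫ x, uk k x * φ x ∂ν) atTop (nhds (∫ x, u x * φ x ∂ν))) :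
    ∀ᵐ x ∂ν, ∀ ε : ℝ, 0 < ε →
      limsup (fun k => essInf (uk k) (ν.restrict (ball x ε))) atTop ≤ u x ∧
      u x ≤ liminf (fun k => essSup (uk k) (ν.restrict (ball x ε))) atTop := by
  classical
  obtain ⟨C, hC⟩ := weakstar_uniform_bound ν uk huk_meas huk_bdd
    (fun φ hφ => ⟨_, hweak φ hφ⟩)
  have huk_int : ∀ k, Integrable (uk k) ν := fun k =>
    (integrable_const C).mono' (huk_meas k).aestronglyMeasurable
      ((hC k).mono fun x hx => by simpa [Real.norm_eq_abs] using hx)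
  have hu_int : Integrable u ν := by
    obtain ⟨Cu, hCu⟩ := hu_bdd
    exact (integrable_const Cu).mono' hu_meas.aestronglyMeasurable
      (hCu.mono fun x hx => by simpa [Real.norm_eq_abs] using hx)
  -- a.e. all balls have positive measure
  have hpos : ∀ᵐ x ∂ν, ∀ ε : ℝ, 0 < ε → ν (ball x ε) ≠ 0 := by
    filter_upwards [hLDP (fun _ => (1 : ℝ)) (integrable_const 1)] with x hx ε hε h0
    have hzero : ∀ᶠ r in nhdsWithin (0 : ℝ) (Ioi 0),
        ((ν (ball x r)).toReal)⁻¹ * ∫ y in ball x r, (1 : ℝ) ∂ν = 0 := by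
      filter_upwards [Ioc_mem_nhdsGT_of_mem (Set.left_mem_Ico.2 hε)] with r hr
      have hr0 : ν (ball x r) = 0 := measure_mono_null (ball_subset_ball hr.2) h0
      simp [hr0]
    have h0' : Tendsto (fun r : ℝ => ((ν (ball x r)).toReal)⁻¹ * ∫ y in ball x r, (1 : ℝ) ∂ν)
        (nhdsWithin 0 (Ioi 0)) (nhds 0) := by
      refine (tendsto_congr' hzero).2 ?_
      exact tendsto_const_nhds
    exact zero_ne_one (tendsto_nhds_unique h0' hx)
  filter_upwards [hpos, hLDP u hu_int] with x hx_pos hx_avg ε hε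
  -- convergence of ball averages from weak-* convergence
  have hb_conv : ∀ δ : ℝ, 0 < δ →
      Tendsto (fun k => ((ν (ball x δ)).toReal)⁻¹ * ∫ y in ball x δ, uk k y ∂ν) atTop
        (nhds (((ν (ball x δ)).toReal)⁻¹ * ∫ y in ball x δ, u y ∂ν)) := by
    intro δ hδ
    have hφ : Integrable ((ball x δ).indicator fun _ => (1 : ℝ)) ν :=
      (integrable_const 1).indicator measurableSet_ball
    have key : ∀ f : X → ℝ,
        ∫ y, f y * (ball x δ).indicator (fun _ => (1 : ℝ)) y ∂ν = ∫ y in ball x δ, f y ∂ν := by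
      intro f
      rw [← integral_indicator measurableSet_ball]
      refine integral_congr_ae (Eventually.of_forall fun y => ?_)
      by_cases h : y ∈ ball x δ <;> simp [h]
    have h' : Tendsto (fun k => ∫ y in ball x δ, uk k y ∂ν) atTop
        (nhds (∫ y in ball x δ, u y ∂ν)) := by
      simpa only [key] using hweak _ hφ
    exact h'.const_mul _
  haveI hNeBot : (ae (ν.restrict (ball x ε))).NeBot :=
    ae_neBot.2 fun h => hx_pos ε hε (Measure.restrict_eq_zero.1 h)
  have hbdd_below : ∀ k, IsBoundedUnder (· ≥ ·) (ae (ν.restrict (ball x ε))) (uk k) :=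
    fun k => ⟨-C, eventually_map.2 ((ae_restrict_of_ae (hC k)).mono
      fun y hy => neg_le_of_abs_le hy)⟩
  have hbdd_above : ∀ k, IsBoundedUnder (· ≤ ·) (ae (ν.restrict (ball x ε))) (uk k) :=
    fun k => ⟨C, eventually_map.2 ((ae_restrict_of_ae (hC k)).mono
      fun y hy => le_of_abs_le hy)⟩
  constructor
  · -- limsup essInf ≤ u x
    set I := fun k => essInf (uk k) (ν.restrict (ball x ε)) with hIdef
    have hcob : IsCoboundedUnder (· ≤ ·) atTop I := by
      refine IsBoundedUnder.isCoboundedUnder_le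
        ⟨-C, eventually_map.2 (Eventually.of_forall fun k => ?_)⟩
      show -C ≤ I k
      exact le_liminf_of_le ((hbdd_above k).isCoboundedUnder_ge)
        ((ae_restrict_of_ae (hC k)).mono fun y hy => neg_le_of_abs_le hy)
    have hkey : ∀ δ : ℝ, 0 < δ → δ ≤ ε →
        limsup I atTop ≤ ((ν (ball x δ)).toReal)⁻¹ * ∫ y in ball x δ, u y ∂ν := by
      intro δ hδ hδε
      have hb := hb_conv δ hδ
      have ht : 0 < (ν (ball x δ)).toReal :=
        ENNReal.toReal_pos (hx_pos δ hδ) (measure_ne_top ν _)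
      have hIle : ∀ k, I k ≤ ((ν (ball x δ)).toReal)⁻¹ * ∫ y in ball x δ, uk k y ∂ν := by
        intro k
        have h_ae : ∀ᵐ y ∂ν.restrict (ball x δ), I k ≤ uk k y :=
          ae_restrict_of_ae_restrict_of_subset (ball_subset_ball hδε)
            (ae_essInf_le (hbdd_below k))
        have h1 : ∫ y in ball x δ, I k ∂ν ≤ ∫ y in ball x δ, uk k y ∂ν :=
          integral_mono_ae (integrable_const _) ((huk_int k).restrict) h_ae
        rw [setIntegral_const, smul_eq_mul, measureReal_def] at h1
        rw [inv_mul_eq_div, le_div_iff₀ ht]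
        linarith
      have hfin := limsup_le_limsup (Eventually.of_forall hIle) hcob hb.isBoundedUnder_le
      rwa [hb.limsup_eq] at hfin
    exact ge_of_tendsto hx_avg
      (eventually_of_mem (Ioc_mem_nhdsGT_of_mem (Set.left_mem_Ico.2 hε)) fun δ hδ => hkey δ hδ.1 hδ.2)
  · -- u x ≤ liminf essSup
    set S := fun k => essSup (uk k) (ν.restrict (ball x ε)) with hSdef
    have hcob : IsCoboundedUnder (· ≥ ·) atTop S := by
      refine IsBoundedUnder.isCoboundedUnder_ge
        ⟨C, eventually_map.2 (Eventually.of_forall fun k => ?_)⟩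
      show S k ≤ C
      exact limsup_le_of_le ((hbdd_below k).isCoboundedUnder_le)
        ((ae_restrict_of_ae (hC k)).mono fun y hy => le_of_abs_le hy)
    have hkey : ∀ δ : ℝ, 0 < δ → δ ≤ ε →
        ((ν (ball x δ)).toReal)⁻¹ * ∫ y in ball x δ, u y ∂ν ≤ liminf S atTop := by
      intro δ hδ hδε
      have hb := hb_conv δ hδ
      have ht : 0 < (ν (ball x δ)).toReal :=
        ENNReal.toReal_pos (hx_pos δ hδ) (measure_ne_top ν _)
      have hSge : ∀ k, ((ν (ball x δ)).toReal)⁻¹ * ∫ y in ball x δ, uk k y ∂ν ≤ S k := by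
        intro k
        have h_ae : ∀ᵐ y ∂ν.restrict (ball x δ), uk k y ≤ S k :=
          ae_restrict_of_ae_restrict_of_subset (ball_subset_ball hδε)
            (ae_le_essSup (hbdd_above k))
        have h1 : ∫ y in ball x δ, uk k y ∂ν ≤ ∫ y in ball x δ, S k ∂ν :=
          integral_mono_ae ((huk_int k).restrict) (integrable_const _) h_ae
        rw [setIntegral_const, smul_eq_mul, measureReal_def] at h1
        rw [inv_mul_eq_div, div_le_iff₀ ht]
        linarith
      have hfin := liminf_le_liminf (Eventually.of_forall hSge) hb.isBoundedUnder_ge hcob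
      rwa [hb.liminf_eq] at hfin
    exact le_of_tendsto hx_avg
      (eventually_of_mem (Ioc_mem_nhdsGT_of_mem (Set.left_mem_Ico.2 hε)) fun δ hδ => hkey δ hδ.1 hδ.2)
end

section
/- Coarea formula for the nonlocal essential total variation: for ν-essentially bounded measurable u : X → ℝ, TV_ε(u) = ∫_ℝ Per_ε({u ≥ t}) dt, where TV_ε(u) := (w₀/ε)∫(esssup_{ν,B_ε(·)} u − u)dρ₀ + (w₁/ε)∫(u − essinf_{ν,B_ε(·)} u)dρ₁ and Per_ε(A) := TV_ε(1_A). -/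
open Set Metric MeasureTheory
open Filter ENNReal
set_option linter.unusedSectionVars false
set_option linter.unusedVariables false

/-- The nonlocal essential total variation
`TV_ε(u) = (w₀/ε)∫(esssup_{ν,B_ε(·)} u − u)dρ₀ + (w₁/ε)∫(u − essinf_{ν,B_ε(·)} u)dρ₁`. -/
noncomputable def nonlocalTV {X : Type*} [PseudoMetricSpace X] [MeasurableSpace X]
    (ν ρ₀ ρ₁ : Measure X) (w₀ w₁ ε : ℝ) (u : X → ℝ) : ℝ :=
  (w₀ / ε) * ∫ x, (essSup u (ν.restrict (ball x ε)) - u x) ∂ρ₀ +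
  (w₁ / ε) * ∫ x, (u x - essInf u (ν.restrict (ball x ε))) ∂ρ₁

/-- The associated nonlocal perimeter `Per_ε(A) := TV_ε(1_A)`. -/
noncomputable def nonlocalPer {X : Type*} [PseudoMetricSpace X] [MeasurableSpace X]
    (ν ρ₀ ρ₁ : Measure X) (w₀ w₁ ε : ℝ) (A : Set X) : ℝ :=
  nonlocalTV ν ρ₀ ρ₁ w₀ w₁ ε (A.indicator fun _ => (1 : ℝ))

section AuxLemmas
variable {α : Type*} [MeasurableSpace α] {μ : Measure α}

lemma essSup_zero_real (f : α → ℝ) : essSup f (0 : Measure α) = 0 := by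
  simp only [essSup, ae_zero, limsup_eq, eventually_bot, setOf_true]
  exact Real.sInf_of_not_bddBelow not_bddBelow_univ

lemma essInf_zero_real (f : α → ℝ) : essInf f (0 : Measure α) = 0 := by
  simp only [essInf, ae_zero, liminf_eq, eventually_bot, setOf_true]
  exact Real.sSup_of_not_bddAbove not_bddAbove_univ

lemma ind_le_one (s : Set α) (x : α) : s.indicator (fun _ => (1:ℝ)) x ≤ 1 := by
  by_cases hx : x ∈ s <;> simp [hx]

lemma ind_nonneg (s : Set α) (x : α) : 0 ≤ s.indicator (fun _ => (1:ℝ)) x := by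
  by_cases hx : x ∈ s <;> simp [hx]

lemma essSup_indicator_one_of_pos {s : Set α} (hs : μ s ≠ 0) :
    essSup (s.indicator (fun _ => (1:ℝ))) μ = 1 := by
  have hne : (ae μ).NeBot := ae_neBot.2 (fun h => hs (by simp [h]))
  have hb : IsBoundedUnder (· ≤ ·) (ae μ) (s.indicator (fun _ => (1:ℝ))) :=
    isBoundedUnder_of ⟨1, ind_le_one s⟩
  have hb' : IsBoundedUnder (· ≥ ·) (ae μ) (s.indicator (fun _ => (1:ℝ))) :=
    isBoundedUnder_of ⟨0, ind_nonneg s⟩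
  refine le_antisymm ?_ ?_
  · exact limsup_le_of_le hb'.isCoboundedUnder_le
      (Eventually.of_forall (ind_le_one s))
  · refine le_limsup_of_frequently_le ?_ hb
    have : ∃ᵐ x ∂μ, x ∈ s := frequently_ae_mem_iff.2 hs
    exact this.mono (fun x hx => by simp [Set.indicator_of_mem hx])

lemma essSup_indicator_one_of_null {s : Set α} (hμ : μ ≠ 0) (hs : μ s = 0) :
    essSup (s.indicator (fun _ => (1:ℝ))) μ = 0 := by
  have h0 : s.indicator (fun _ => (1:ℝ)) =ᵐ[μ] (fun _ => (0:ℝ)) := by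
    filter_upwards [measure_eq_zero_iff_ae_notMem.1 hs] with x hx
    simp [Set.indicator_of_notMem hx]
  rw [essSup_congr_ae h0, essSup_const _ hμ]

lemma essInf_indicator_one_of_ae_mem {s : Set α} (hμ : μ ≠ 0) (hs : μ sᶜ = 0) :
    essInf (s.indicator (fun _ => (1:ℝ))) μ = 1 := by
  have h0 : s.indicator (fun _ => (1:ℝ)) =ᵐ[μ] (fun _ => (1:ℝ)) := by
    filter_upwards [measure_eq_zero_iff_ae_notMem.1 hs] with x hx
    simp at hx
    simp [Set.indicator_of_mem hx]
  rw [essInf_congr_ae h0, essInf_const _ hμ]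

lemma essInf_indicator_one_of_pos_compl {s : Set α} (hs : μ sᶜ ≠ 0) :
    essInf (s.indicator (fun _ => (1:ℝ))) μ = 0 := by
  have hne : (ae μ).NeBot := ae_neBot.2 (fun h => hs (by simp [h]))
  have hb : IsBoundedUnder (· ≤ ·) (ae μ) (s.indicator (fun _ => (1:ℝ))) :=
    isBoundedUnder_of ⟨1, ind_le_one s⟩
  have hb' : IsBoundedUnder (· ≥ ·) (ae μ) (s.indicator (fun _ => (1:ℝ))) :=
    isBoundedUnder_of ⟨0, ind_nonneg s⟩
  refine le_antisymm ?_ ?_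
  · refine liminf_le_of_frequently_le ?_ hb'
    have : ∃ᵐ x ∂μ, x ∈ sᶜ := frequently_ae_mem_iff.2 hs
    exact this.mono (fun x hx => by simp [Set.indicator_of_notMem hx])
  · exact le_liminf_of_le hb.isCoboundedUnder_ge
      (Eventually.of_forall (ind_nonneg s))

section essbounds
variable {u : α → ℝ} {C t : ℝ}

lemma meas_le_ne_zero_of_lt_essSup (hμ : μ ≠ 0) (hC : ∀ᵐ y ∂μ, |u y| ≤ C)
    (ht : t < essSup u μ) : μ {y | t ≤ u y} ≠ 0 := by
  have hne : (ae μ).NeBot := ae_neBot.2 hμ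
  have hb' : IsBoundedUnder (· ≥ ·) (ae μ) u :=
    ⟨-C, eventually_map.2 (by filter_upwards [hC] with y hy using (abs_le.1 hy).1)⟩
  have hfr : ∃ᶠ y in ae μ, t < u y :=
    frequently_lt_of_lt_limsup hb'.isCoboundedUnder_le ht
  have : μ {y | t < u y} ≠ 0 := frequently_ae_iff.1 hfr
  intro h0
  exact this (measure_mono_null (fun y (hy : t < u y) => le_of_lt hy) h0)

lemma meas_le_eq_zero_of_essSup_lt (hC : ∀ᵐ y ∂μ, |u y| ≤ C)
    (ht : essSup u μ < t) : μ {y | t ≤ u y} = 0 := by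
  have hb : IsBoundedUnder (· ≤ ·) (ae μ) u :=
    ⟨C, eventually_map.2 (by filter_upwards [hC] with y hy using (abs_le.1 hy).2)⟩
  have := eventually_lt_of_limsup_lt ht hb
  refine measure_eq_zero_iff_ae_notMem.2 ?_
  filter_upwards [this] with y hy
  simpa using not_le.2 hy

lemma meas_lt_ne_zero_of_essInf_lt (hμ : μ ≠ 0) (hC : ∀ᵐ y ∂μ, |u y| ≤ C)
    (ht : essInf u μ < t) : μ {y | u y < t} ≠ 0 := by
  have hne : (ae μ).NeBot := ae_neBot.2 hμ
  have hb : IsBoundedUnder (· ≤ ·) (ae μ) u :=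
    ⟨C, eventually_map.2 (by filter_upwards [hC] with y hy using (abs_le.1 hy).2)⟩
  have hfr : ∃ᶠ y in ae μ, u y < t :=
    frequently_lt_of_liminf_lt hb.isCoboundedUnder_ge ht
  exact frequently_ae_iff.1 hfr

lemma meas_lt_eq_zero_of_lt_essInf (hC : ∀ᵐ y ∂μ, |u y| ≤ C)
    (ht : t < essInf u μ) : μ {y | u y < t} = 0 := by
  have hb' : IsBoundedUnder (· ≥ ·) (ae μ) u :=
    ⟨-C, eventually_map.2 (by filter_upwards [hC] with y hy using (abs_le.1 hy).1)⟩
  have := eventually_lt_of_lt_liminf ht hb'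
  refine measure_eq_zero_iff_ae_notMem.2 ?_
  filter_upwards [this] with y hy
  simpa using not_lt.2 hy.le

lemma essSup_le_of_ae_abs_le (hμ : μ ≠ 0) (hC : ∀ᵐ y ∂μ, |u y| ≤ C) :
    essSup u μ ≤ C := by
  have hne : (ae μ).NeBot := ae_neBot.2 hμ
  have hb' : IsBoundedUnder (· ≥ ·) (ae μ) u :=
    ⟨-C, eventually_map.2 (by filter_upwards [hC] with y hy using (abs_le.1 hy).1)⟩
  exact limsup_le_of_le hb'.isCoboundedUnder_le
    (by filter_upwards [hC] with y hy using (abs_le.1 hy).2)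

lemma neg_le_essInf_of_ae_abs_le (hμ : μ ≠ 0) (hC : ∀ᵐ y ∂μ, |u y| ≤ C) :
    -C ≤ essInf u μ := by
  have hne : (ae μ).NeBot := ae_neBot.2 hμ
  have hb : IsBoundedUnder (· ≤ ·) (ae μ) u :=
    ⟨C, eventually_map.2 (by filter_upwards [hC] with y hy using (abs_le.1 hy).2)⟩
  exact le_liminf_of_le hb.isCoboundedUnder_ge
    (by filter_upwards [hC] with y hy using (abs_le.1 hy).1)

end essbounds

lemma covering_null {X : Type*} [MetricSpace X] [MeasurableSpace X]
    [TopologicalSpace.SeparableSpace X]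
    (ν : Measure X) {ε : ℝ} (hε : 0 < ε) (A : Set X) :
    ν {x | x ∈ A ∧ ν (ball x ε ∩ A) = 0} = 0 := by
  set S := {x | x ∈ A ∧ ν (ball x ε ∩ A) = 0} with hS
  rcases isEmpty_or_nonempty X with hX | hX
  · have : S = ∅ := Set.eq_empty_of_isEmpty S
    simp [this]
  obtain ⟨D, hD⟩ : ∃ D : ℕ → X, DenseRange D := ⟨TopologicalSpace.denseSeq X,
    TopologicalSpace.denseRange_denseSeq X⟩
  have hcover : S ⊆ ⋃ n, S ∩ ball (D n) (ε / 2) := by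
    intro x hx
    obtain ⟨n, hn⟩ := hD.exists_dist_lt x (by linarith : (0:ℝ) < ε / 2)
    exact Set.mem_iUnion.2 ⟨n, hx, by rwa [mem_ball]⟩
  refine measure_mono_null hcover (measure_iUnion_null fun n => ?_)
  rcases Set.eq_empty_or_nonempty (S ∩ ball (D n) (ε / 2)) with he | ⟨x₀, hx₀S, hx₀b⟩
  · simp [he]
  refine measure_mono_null (fun y hy => ?_) hx₀S.2
  rcases hy with ⟨hyS, hyb⟩
  constructor
  · rw [mem_ball]
    calc dist y x₀ ≤ dist y (D n) + dist (D n) x₀ := dist_triangle _ _ _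
    _ < ε / 2 + ε / 2 := by
        rw [mem_ball] at hyb hx₀b
        rw [dist_comm (D n) x₀]
        exact add_lt_add hyb hx₀b
    _ = ε := by ring
  · exact hyS.1

open Set Metric MeasureTheory Filter


end AuxLemmas

theorem nonlocalTV_coarea {X : Type*} [MetricSpace X] [MeasurableSpace X] [BorelSpace X]
    [TopologicalSpace.SeparableSpace X]
    (ν ρ₀ ρ₁ : Measure X) [IsFiniteMeasure ν]
    [IsProbabilityMeasure ρ₀] [IsProbabilityMeasure ρ₁]
    (hac₀ : ρ₀ ≪ ν) (hac₁ : ρ₁ ≪ ν)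
    (w₀ w₁ : ℝ) (hw₀ : 0 ≤ w₀) (hw₁ : 0 ≤ w₁)
    (ε : ℝ) (hε : 0 < ε)
    (u : X → ℝ) (hu_meas : Measurable u)
    -- `u` is `ν`-essentially bounded
    (hu_bdd : ∃ C : ℝ, ∀ᵐ x ∂ν, |u x| ≤ C) :
    nonlocalTV ν ρ₀ ρ₁ w₀ w₁ ε u =
      ∫ t : ℝ, nonlocalPer ν ρ₀ ρ₁ w₀ w₁ ε {x | t ≤ u x} := by
  classical
  obtain ⟨C₀, hC₀⟩ := hu_bdd
  have hC : ∀ᵐ x ∂ν, |u x| ≤ max C₀ 0 :=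
    hC₀.mono fun x hx => le_trans hx (le_max_left _ _)
  set C : ℝ := max C₀ 0 with hCdef
  set μB : X → Measure X := fun x => ν.restrict (ball x ε) with hμBdef
  set M : X → ℝ := fun x => essSup u (μB x) with hMdef
  set m : X → ℝ := fun x => essInf u (μB x) with hmdef
  set ind : ℝ → X → ℝ := fun t => ({y | t ≤ u y}).indicator (fun _ => (1:ℝ)) with hinddef
  set F₀ : ℝ × X → ℝ :=
    fun p => if ν (ball p.2 ε ∩ {y | p.1 ≤ u y}) ≠ 0 then 1 else 0 with hF₀def
  set F₁ : ℝ × X → ℝ :=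
    fun p => if ν (ball p.2 ε) ≠ 0 ∧ ν (ball p.2 ε ∩ {y | u y < p.1}) = 0 then 1 else 0
    with hF₁def
  have hA : ∀ t : ℝ, MeasurableSet {y | t ≤ u y} := fun t => hu_meas measurableSet_Ici
  have hB : ∀ t : ℝ, MeasurableSet {y | u y < t} := fun t => hu_meas measurableSet_Iio
  have hres₀ : ∀ (t : ℝ) (x : X), (μB x) {y | t ≤ u y} = ν (ball x ε ∩ {y | t ≤ u y}) := by
    intro t x
    rw [hμBdef]
    rw [Measure.restrict_apply (hA t), Set.inter_comm]
  have hres₁ : ∀ (t : ℝ) (x : X), (μB x) {y | u y < t} = ν (ball x ε ∩ {y | u y < t}) := by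
    intro t x
    rw [hμBdef]
    rw [Measure.restrict_apply (hB t), Set.inter_comm]
  have hμBnz : ∀ x, ν (ball x ε) ≠ 0 → μB x ≠ 0 :=
    fun x h h' => h (Measure.restrict_eq_zero.1 h')
  have hCr : ∀ x, ∀ᵐ y ∂(μB x), |u y| ≤ C := fun x => ae_restrict_of_ae hC
  -- essSup/essInf of indicators, globally
  have hF : ∀ (t : ℝ) (x : X), essSup (ind t) (μB x) = F₀ (t, x) := by
    intro t x
    by_cases hb : ν (ball x ε) = 0
    · have h1 : μB x = 0 := Measure.restrict_eq_zero.2 hb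
      have h2 : ν (ball x ε ∩ {y | t ≤ u y}) = 0 :=
        measure_mono_null Set.inter_subset_left hb
      rw [hinddef, h1, essSup_zero_real]
      simp [hF₀def, h2]
    · by_cases h0 : ν (ball x ε ∩ {y | t ≤ u y}) = 0
      · have h1 : μB x {y | t ≤ u y} = 0 := by rw [hres₀]; exact h0
        rw [hinddef, essSup_indicator_one_of_null (hμBnz x hb) h1]
        simp [hF₀def, h0]
      · have h1 : μB x {y | t ≤ u y} ≠ 0 := by rw [hres₀]; exact h0
        rw [hinddef, essSup_indicator_one_of_pos h1]
        simp [hF₀def, h0]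
  have hF' : ∀ (t : ℝ) (x : X), essInf (ind t) (μB x) = F₁ (t, x) := by
    intro t x
    have hcompl : {y | t ≤ u y}ᶜ = {y | u y < t} := by
      ext y; simp [not_le]
    by_cases hb : ν (ball x ε) = 0
    · have h1 : μB x = 0 := Measure.restrict_eq_zero.2 hb
      rw [hinddef, h1, essInf_zero_real]
      simp [hF₁def, hb]
    · by_cases h0 : ν (ball x ε ∩ {y | u y < t}) = 0
      · have h1 : μB x {y | t ≤ u y}ᶜ = 0 := by rw [hcompl, hres₁]; exact h0
        rw [hinddef, essInf_indicator_one_of_ae_mem (hμBnz x hb) h1]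
        simp [hF₁def, hb, h0]
      · have h1 : μB x {y | t ≤ u y}ᶜ ≠ 0 := by rw [hcompl, hres₁]; exact h0
        rw [hinddef, essInf_indicator_one_of_pos_compl h1]
        simp [hF₁def, hb, h0]
  -- the good set
  have h1 : ∀ᵐ x ∂ν, ν (ball x ε) ≠ 0 := by
    rw [ae_iff]
    refine measure_mono_null ?_ (covering_null ν hε (univ : Set X))
    intro x hx
    simp only [mem_setOf_eq, not_not] at hx
    exact ⟨trivial, by simpa using hx⟩
  have h2 : ∀ᵐ x ∂ν, ¬ (ν (ball x ε) ≠ 0 ∧ M x < u x) := by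
    rw [ae_iff]
    refine measure_mono_null ?_
      (measure_iUnion_null (fun q : ℚ => covering_null ν hε {y | (q:ℝ) ≤ u y}))
    intro x hx
    simp only [mem_setOf_eq, not_not] at hx
    obtain ⟨hb, hlt⟩ := hx
    obtain ⟨q, hq1, hq2⟩ := exists_rat_btwn hlt
    refine mem_iUnion.2 ⟨q, hq2.le, ?_⟩
    rw [← hres₀]
    exact meas_le_eq_zero_of_essSup_lt (hCr x) hq1
  have h3 : ∀ᵐ x ∂ν, ¬ (ν (ball x ε) ≠ 0 ∧ u x < m x) := by
    rw [ae_iff]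
    refine measure_mono_null ?_
      (measure_iUnion_null (fun q : ℚ => covering_null ν hε {y | u y ≤ (q:ℝ)}))
    intro x hx
    simp only [mem_setOf_eq, not_not] at hx
    obtain ⟨hb, hlt⟩ := hx
    obtain ⟨q, hq1, hq2⟩ := exists_rat_btwn hlt
    refine mem_iUnion.2 ⟨q, hq1.le, ?_⟩
    have hz : μB x {y | u y < ((q:ℝ) + m x)/2} = 0 :=
      meas_lt_eq_zero_of_lt_essInf (hCr x) (by linarith)
    have hsub : {y | u y ≤ (q:ℝ)} ⊆ {y | u y < ((q:ℝ) + m x)/2} := by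
      intro y hy
      simp only [mem_setOf_eq] at hy ⊢
      linarith
    have hzz : μB x {y | u y ≤ (q:ℝ)} = 0 := measure_mono_null hsub hz
    rw [Set.inter_comm, ← Measure.restrict_apply (measurableSet_le hu_meas measurable_const)]
    exact hzz
  have hgood : ∀ᵐ x ∂ν,
      ν (ball x ε) ≠ 0 ∧ u x ≤ M x ∧ m x ≤ u x ∧ |u x| ≤ C := by
    filter_upwards [h1, h2, h3, hC] with x hx1 hx2 hx3 hx4
    refine ⟨hx1, ?_, ?_, hx4⟩
    · by_contra h
      exact hx2 ⟨hx1, not_le.1 h⟩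
    · by_contra h
      exact hx3 ⟨hx1, not_le.1 h⟩
  -- measurability
  have : SecondCountableTopology X := UniformSpace.secondCountable_of_separable X
  have hψ₀m : Measurable fun p : ℝ × X => ν (ball p.2 ε ∩ {y | p.1 ≤ u y}) := by
    have hS : MeasurableSet {q : (ℝ × X) × X | dist q.2 q.1.2 < ε ∧ q.1.1 ≤ u q.2} := by
      refine MeasurableSet.inter ?_ ?_
      · exact measurableSet_lt (measurable_snd.dist measurable_fst.snd)
          measurable_const
      · exact measurableSet_le measurable_fst.fst
          (hu_meas.comp measurable_snd)
    have := measurable_measure_prodMk_left (ν := ν) hS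
    convert this using 2
    rfl
  have hψ₁m : Measurable fun p : ℝ × X => ν (ball p.2 ε ∩ {y | u y < p.1}) := by
    have hS : MeasurableSet {q : (ℝ × X) × X | dist q.2 q.1.2 < ε ∧ u q.2 < q.1.1} := by
      refine MeasurableSet.inter ?_ ?_
      · exact measurableSet_lt (measurable_snd.dist measurable_fst.snd)
          measurable_const
      · exact measurableSet_lt (hu_meas.comp measurable_snd)
          measurable_fst.fst
    have := measurable_measure_prodMk_left (ν := ν) hS
    convert this using 2
    rfl
  have hballm : Measurable fun p : ℝ × X => ν (ball p.2 ε) := by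
    have hS : MeasurableSet {q : (ℝ × X) × X | dist q.2 q.1.2 < ε} :=
      measurableSet_lt (measurable_snd.dist measurable_fst.snd)
        measurable_const
    have := measurable_measure_prodMk_left (ν := ν) hS
    convert this using 2
    rfl
  have hF₀m : Measurable F₀ := by
    rw [hF₀def]
    exact Measurable.ite (hψ₀m ((measurableSet_singleton 0).compl)) measurable_const
      measurable_const
  have hF₁m : Measurable F₁ := by
    rw [hF₁def]
    refine Measurable.ite ?_ measurable_const measurable_const
    exact (hballm ((measurableSet_singleton 0).compl)).inter
      (hψ₁m (measurableSet_singleton 0))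
  have hindm : Measurable fun p : ℝ × X => ind p.1 p.2 := by
    rw [hinddef]
    have hset : MeasurableSet {p : ℝ × X | p.1 ≤ u p.2} :=
      measurableSet_le measurable_fst (hu_meas.comp measurable_snd)
    have : (fun p : ℝ × X => ({y | p.1 ≤ u y}).indicator (fun _ => (1:ℝ)) p.2)
        = ({p : ℝ × X | p.1 ≤ u p.2}).indicator (fun _ => (1:ℝ)) := by
      funext p
      by_cases h : p.1 ≤ u p.2
      · rw [Set.indicator_of_mem (by exact h), Set.indicator_of_mem (by exact h)]
      · rw [Set.indicator_of_notMem (by exact h), Set.indicator_of_notMem (by exact h)]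
    rw [this]
    exact measurable_const.indicator hset
  set K₀ : ℝ × X → ℝ≥0∞ := fun p => ENNReal.ofReal (F₀ p - ind p.1 p.2) with hK₀def
  set K₁ : ℝ × X → ℝ≥0∞ := fun p => ENNReal.ofReal (ind p.1 p.2 - F₁ p) with hK₁def
  have hK₀m : Measurable K₀ := (hF₀m.sub hindm).ennreal_ofReal
  have hK₁m : Measurable K₁ := (hindm.sub hF₁m).ennreal_ofReal
  -- per-t : nonnegativity a.e. and Bochner-to-lintegral identity
  have hF₀le : ∀ p : ℝ × X, F₀ p ≤ 1 := by
    intro p; rw [hF₀def]; dsimp only; split <;> norm_num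
  have hF₀nn : ∀ p : ℝ × X, 0 ≤ F₀ p := by
    intro p; rw [hF₀def]; dsimp only; split <;> norm_num
  have hF₁le : ∀ p : ℝ × X, F₁ p ≤ 1 := by
    intro p; rw [hF₁def]; dsimp only; split <;> norm_num
  have hF₁nn : ∀ p : ℝ × X, 0 ≤ F₁ p := by
    intro p; rw [hF₁def]; dsimp only; split <;> norm_num
  have hindle : ∀ t x, ind t x ≤ 1 := by
    intro t x; rw [hinddef]; exact ind_le_one _ _
  have hindnn : ∀ t x, 0 ≤ ind t x := by
    intro t x; rw [hinddef]; exact ind_nonneg _ _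
  have hind_of : ∀ t x, t ≤ u x → ind t x = 1 := by
    intro t x h
    rw [hinddef]
    dsimp only
    rw [Set.indicator_apply, if_pos (show x ∈ {y | t ≤ u y} from h)]
  have hind_not : ∀ t x, ¬ t ≤ u x → ind t x = 0 := by
    intro t x h
    rw [hinddef]
    dsimp only
    rw [Set.indicator_apply, if_neg (show x ∉ {y | t ≤ u y} from h)]
  have hnn₀ : ∀ t : ℝ, ∀ᵐ x ∂ν, 0 ≤ F₀ (t, x) - ind t x := by
    intro t
    rw [ae_iff]
    refine measure_mono_null ?_ (covering_null ν hε {y | t ≤ u y})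
    intro x hx
    simp only [mem_setOf_eq, not_le] at hx
    have h1 : t ≤ u x := by
      by_contra h
      rw [hind_not t x h] at hx
      have := hF₀nn (t, x)
      linarith
    have h2 : F₀ (t, x) < 1 := by
      rw [hind_of t x h1] at hx
      linarith
    have h3 : ν (ball x ε ∩ {y | t ≤ u y}) = 0 := by
      by_contra h
      rw [hF₀def] at h2
      simp only [if_pos h] at h2
      exact lt_irrefl _ h2
    exact ⟨h1, h3⟩
  have hnn₁ : ∀ t : ℝ, ∀ᵐ x ∂ν, 0 ≤ ind t x - F₁ (t, x) := by
    intro t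
    rw [ae_iff]
    refine measure_mono_null ?_ (covering_null ν hε {y | u y < t})
    intro x hx
    simp only [mem_setOf_eq, not_le] at hx
    have h1 : u x < t := by
      by_contra h
      rw [hind_of t x (not_lt.1 h)] at hx
      have := hF₁le (t, x)
      linarith
    have h2 : 0 < F₁ (t, x) := by
      rw [hind_not t x (not_le.2 h1)] at hx
      linarith
    have h3 : ν (ball x ε ∩ {y | u y < t}) = 0 := by
      rw [hF₁def] at h2
      dsimp only at h2
      by_contra h
      rw [if_neg (fun hc => h hc.2)] at h2
      exact lt_irrefl _ h2
    exact ⟨h1, h3⟩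
  set I₀ : ℝ → ℝ := fun t => ∫ x, (essSup (ind t) (μB x) - ind t x) ∂ρ₀ with hI₀def
  set I₁ : ℝ → ℝ := fun t => ∫ x, (ind t x - essInf (ind t) (μB x)) ∂ρ₁ with hI₁def
  have heq₀ : ∀ t : ℝ, I₀ t = (∫⁻ x, K₀ (t, x) ∂ρ₀).toReal := by
    intro t
    rw [hI₀def]
    dsimp only
    rw [integral_congr_ae (Eventually.of_forall (fun x => by rw [hF t x]))]
    rw [integral_eq_lintegral_of_nonneg_ae (hac₀.ae_le (hnn₀ t))
      (((hF₀m.sub hindm).comp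
        (measurable_prodMk_left : Measurable fun x : X => ((t, x) : ℝ × X))).aestronglyMeasurable)]
  have heq₁ : ∀ t : ℝ, I₁ t = (∫⁻ x, K₁ (t, x) ∂ρ₁).toReal := by
    intro t
    rw [hI₁def]
    dsimp only
    rw [integral_congr_ae (Eventually.of_forall (fun x => by rw [hF' t x]))]
    rw [integral_eq_lintegral_of_nonneg_ae (hac₁.ae_le (hnn₁ t))
      (((hindm.sub hF₁m).comp
        (measurable_prodMk_left : Measurable fun x : X => ((t, x) : ℝ × X))).aestronglyMeasurable)]
  -- per-x computations
  have hPx₀ : ∀ᵐ x ∂ν, (∫⁻ t, K₀ (t, x) ∂(volume : Measure ℝ)) = ENNReal.ofReal (M x - u x) := by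
    filter_upwards [hgood] with x hx
    have hμ : μB x ≠ 0 := hμBnz x hx.1
    have htriv : (volume : Measure ℝ) ({u x, M x} : Set ℝ) = 0 :=
      measure_union_null Real.volume_singleton Real.volume_singleton
    have haet : ∀ᵐ t ∂(volume : Measure ℝ), t ∉ ({u x, M x} : Set ℝ) :=
      measure_eq_zero_iff_ae_notMem.1 htriv
    have hcongr : ∀ᵐ t ∂(volume : Measure ℝ),
        K₀ (t, x) = (Ioo (u x) (M x)).indicator (fun _ => (1:ℝ≥0∞)) t := by
      filter_upwards [haet] with t ht
      simp only [Set.mem_insert_iff, Set.mem_singleton_iff, not_or] at ht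
      obtain ⟨htu, htM⟩ := ht
      rw [hK₀def]
      dsimp only
      rcases lt_trichotomy t (M x) with h | h | h
      · have hpos : ν (ball x ε ∩ {y | t ≤ u y}) ≠ 0 := by
          rw [← hres₀]
          exact meas_le_ne_zero_of_lt_essSup hμ (hCr x) h
        have hFone : F₀ (t, x) = 1 := by rw [hF₀def]; exact if_pos hpos
        rcases lt_or_gt_of_ne htu with h2 | h2
        · have hmem : t ∉ Ioo (u x) (M x) := fun hc => absurd hc.1 (not_lt.2 h2.le)
          rw [hFone, hind_of t x h2.le, Set.indicator_of_notMem hmem]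
          simp
        · have hmem : t ∈ Ioo (u x) (M x) := ⟨h2, h⟩
          rw [hFone, hind_not t x (not_le.2 h2), Set.indicator_of_mem hmem]
          simp
      · exact absurd h htM
      · have hz : ν (ball x ε ∩ {y | t ≤ u y}) = 0 := by
          rw [← hres₀]
          exact meas_le_eq_zero_of_essSup_lt (hCr x) h
        have hFzero : F₀ (t, x) = 0 := by
          rw [hF₀def]; exact if_neg (fun hc => hc hz)
        have hmem : t ∉ Ioo (u x) (M x) := fun hc => absurd hc.2 (not_lt.2 h.le)
        rw [hFzero, hind_not t x (not_le.2 (lt_of_le_of_lt hx.2.1 h)),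
          Set.indicator_of_notMem hmem]
        simp
    rw [lintegral_congr_ae hcongr, lintegral_indicator measurableSet_Ioo,
      setLIntegral_one, Real.volume_Ioo]
  have hPx₁ : ∀ᵐ x ∂ν, (∫⁻ t, K₁ (t, x) ∂(volume : Measure ℝ)) = ENNReal.ofReal (u x - m x) := by
    filter_upwards [hgood] with x hx
    have hμ : μB x ≠ 0 := hμBnz x hx.1
    have htriv : (volume : Measure ℝ) ({u x, m x} : Set ℝ) = 0 :=
      measure_union_null Real.volume_singleton Real.volume_singleton
    have haet : ∀ᵐ t ∂(volume : Measure ℝ), t ∉ ({u x, m x} : Set ℝ) :=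
      measure_eq_zero_iff_ae_notMem.1 htriv
    have hcongr : ∀ᵐ t ∂(volume : Measure ℝ),
        K₁ (t, x) = (Ioo (m x) (u x)).indicator (fun _ => (1:ℝ≥0∞)) t := by
      filter_upwards [haet] with t ht
      simp only [Set.mem_insert_iff, Set.mem_singleton_iff, not_or] at ht
      obtain ⟨htu, htm⟩ := ht
      rw [hK₁def]
      dsimp only
      rcases lt_trichotomy t (m x) with h | h | h
      · have hz : ν (ball x ε ∩ {y | u y < t}) = 0 := by
          rw [← hres₁]
          exact meas_lt_eq_zero_of_lt_essInf (hCr x) h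
        have hFone : F₁ (t, x) = 1 := by rw [hF₁def]; exact if_pos ⟨hx.1, hz⟩
        have hmem : t ∉ Ioo (m x) (u x) := fun hc => absurd hc.1 (not_lt.2 h.le)
        rw [hFone, hind_of t x (le_of_lt (lt_of_lt_of_le h hx.2.2.1)),
          Set.indicator_of_notMem hmem]
        simp
      · exact absurd h htm
      · have hpos : ν (ball x ε ∩ {y | u y < t}) ≠ 0 := by
          rw [← hres₁]
          exact meas_lt_ne_zero_of_essInf_lt hμ (hCr x) h
        have hFzero : F₁ (t, x) = 0 := by
          rw [hF₁def]; exact if_neg (fun hc => hpos hc.2)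
        rcases lt_or_gt_of_ne htu with h2 | h2
        · have hmem : t ∈ Ioo (m x) (u x) := ⟨h, h2⟩
          rw [hFzero, hind_of t x h2.le, Set.indicator_of_mem hmem]
          simp
        · have hmem : t ∉ Ioo (m x) (u x) := fun hc => absurd hc.2 (not_lt.2 h2.le)
          rw [hFzero, hind_not t x (not_le.2 h2), Set.indicator_of_notMem hmem]
          simp
    rw [lintegral_congr_ae hcongr, lintegral_indicator measurableSet_Ioo,
      setLIntegral_one, Real.volume_Ioo]
  have hMb : ∀ᵐ x ∂ν, (0 ≤ M x - u x ∧ M x - u x ≤ 2*C) ∧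
      (0 ≤ u x - m x ∧ u x - m x ≤ 2*C) := by
    filter_upwards [hgood] with x hx
    have hμ : μB x ≠ 0 := hμBnz x hx.1
    have h1 : M x ≤ C := essSup_le_of_ae_abs_le hμ (hCr x)
    have h2 : -C ≤ m x := neg_le_essInf_of_ae_abs_le hμ (hCr x)
    have h3 := abs_le.1 hx.2.2.2
    exact ⟨⟨by linarith [hx.2.1], by linarith⟩, ⟨by linarith [hx.2.2.1], by linarith⟩⟩
  -- chains
  have hone_lt_top : (1 : ℝ≥0∞) < ⊤ := ENNReal.one_lt_top
  have hK₀le1 : ∀ p : ℝ × X, K₀ p ≤ 1 := by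
    intro p
    rw [hK₀def]
    refine ENNReal.ofReal_le_one.2 ?_
    have := hF₀le p
    have := hindnn p.1 p.2
    linarith
  have hK₁le1 : ∀ p : ℝ × X, K₁ p ≤ 1 := by
    intro p
    rw [hK₁def]
    refine ENNReal.ofReal_le_one.2 ?_
    have := hindle p.1 p.2
    have := hF₁nn p
    linarith
  set L₀ : ℝ → ℝ≥0∞ := fun t => ∫⁻ x, K₀ (t, x) ∂ρ₀ with hL₀def
  set L₁ : ℝ → ℝ≥0∞ := fun t => ∫⁻ x, K₁ (t, x) ∂ρ₁ with hL₁def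
  have hL₀m : Measurable L₀ := hK₀m.lintegral_prod_right'
  have hL₁m : Measurable L₁ := hK₁m.lintegral_prod_right'
  have hL₀lt : ∀ t, L₀ t < ⊤ := by
    intro t
    rw [hL₀def]
    refine lt_of_le_of_lt ?_ hone_lt_top
    calc ∫⁻ x, K₀ (t, x) ∂ρ₀ ≤ ∫⁻ _, 1 ∂ρ₀ := lintegral_mono fun x => hK₀le1 _
    _ = 1 := by simp
  have hL₁lt : ∀ t, L₁ t < ⊤ := by
    intro t
    rw [hL₁def]
    refine lt_of_le_of_lt ?_ hone_lt_top
    calc ∫⁻ x, K₁ (t, x) ∂ρ₁ ≤ ∫⁻ _, 1 ∂ρ₁ := lintegral_mono fun x => hK₁le1 _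
    _ = 1 := by simp
  have hswap₀ : ∫⁻ t, L₀ t ∂(volume : Measure ℝ) = ∫⁻ x, ∫⁻ t, K₀ (t, x) ∂(volume : Measure ℝ) ∂ρ₀ :=
    lintegral_lintegral_swap hK₀m.aemeasurable
  have hswap₁ : ∫⁻ t, L₁ t ∂(volume : Measure ℝ) = ∫⁻ x, ∫⁻ t, K₁ (t, x) ∂(volume : Measure ℝ) ∂ρ₁ :=
    lintegral_lintegral_swap hK₁m.aemeasurable
  have hV₀ : ∫⁻ x, ∫⁻ t, K₀ (t, x) ∂(volume : Measure ℝ) ∂ρ₀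
      = ∫⁻ x, ENNReal.ofReal (M x - u x) ∂ρ₀ :=
    lintegral_congr_ae (hPx₀.filter_mono hac₀.ae_le)
  have hV₁ : ∫⁻ x, ∫⁻ t, K₁ (t, x) ∂(volume : Measure ℝ) ∂ρ₁
      = ∫⁻ x, ENNReal.ofReal (u x - m x) ∂ρ₁ :=
    lintegral_congr_ae (hPx₁.filter_mono hac₁.ae_le)
  have hV₀fin : ∫⁻ x, ENNReal.ofReal (M x - u x) ∂ρ₀ ≠ ⊤ := by
    refine ne_top_of_le_ne_top (b := ENNReal.ofReal (2*C)) ENNReal.ofReal_ne_top ?_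
    calc ∫⁻ x, ENNReal.ofReal (M x - u x) ∂ρ₀ ≤ ∫⁻ _, ENNReal.ofReal (2*C) ∂ρ₀ := by
          refine lintegral_mono_ae ?_
          filter_upwards [hMb.filter_mono hac₀.ae_le] with x hx
          exact ENNReal.ofReal_le_ofReal hx.1.2
    _ = ENNReal.ofReal (2*C) := by simp
  have hV₁fin : ∫⁻ x, ENNReal.ofReal (u x - m x) ∂ρ₁ ≠ ⊤ := by
    refine ne_top_of_le_ne_top (b := ENNReal.ofReal (2*C)) ENNReal.ofReal_ne_top ?_
    calc ∫⁻ x, ENNReal.ofReal (u x - m x) ∂ρ₁ ≤ ∫⁻ _, ENNReal.ofReal (2*C) ∂ρ₁ := by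
          refine lintegral_mono_ae ?_
          filter_upwards [hMb.filter_mono hac₁.ae_le] with x hx
          exact ENNReal.ofReal_le_ofReal hx.2.2
    _ = ENNReal.ofReal (2*C) := by simp
  have hT₀ : ∫ x, (M x - u x) ∂ρ₀ = (∫⁻ x, ∫⁻ t, K₀ (t, x) ∂(volume : Measure ℝ) ∂ρ₀).toReal := by
    have hmeasL : Measurable fun x => ∫⁻ t, K₀ (t, x) ∂(volume : Measure ℝ) :=
      hK₀m.lintegral_prod_left'
    have h1 : ∫ x, (M x - u x) ∂ρ₀
        = ∫ x, (∫⁻ t, K₀ (t, x) ∂(volume : Measure ℝ)).toReal ∂ρ₀ := by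
      refine integral_congr_ae ?_
      filter_upwards [hPx₀.filter_mono hac₀.ae_le, hMb.filter_mono hac₀.ae_le] with x h1 h2
      rw [h1, ENNReal.toReal_ofReal h2.1.1]
    rw [h1]
    refine integral_toReal hmeasL.aemeasurable ?_
    filter_upwards [hPx₀.filter_mono hac₀.ae_le] with x hx
    rw [hx]
    exact ENNReal.ofReal_lt_top
  have hT₁ : ∫ x, (u x - m x) ∂ρ₁ = (∫⁻ x, ∫⁻ t, K₁ (t, x) ∂(volume : Measure ℝ) ∂ρ₁).toReal := by
    have hmeasL : Measurable fun x => ∫⁻ t, K₁ (t, x) ∂(volume : Measure ℝ) :=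
      hK₁m.lintegral_prod_left'
    have h1 : ∫ x, (u x - m x) ∂ρ₁
        = ∫ x, (∫⁻ t, K₁ (t, x) ∂(volume : Measure ℝ)).toReal ∂ρ₁ := by
      refine integral_congr_ae ?_
      filter_upwards [hPx₁.filter_mono hac₁.ae_le, hMb.filter_mono hac₁.ae_le] with x h1 h2
      rw [h1, ENNReal.toReal_ofReal h2.2.1]
    rw [h1]
    refine integral_toReal hmeasL.aemeasurable ?_
    filter_upwards [hPx₁.filter_mono hac₁.ae_le] with x hx
    rw [hx]
    exact ENNReal.ofReal_lt_top
  have hIfun₀ : I₀ = fun t => (L₀ t).toReal := funext heq₀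
  have hIfun₁ : I₁ = fun t => (L₁ t).toReal := funext heq₁
  have hIint₀ : Integrable I₀ (volume : Measure ℝ) := by
    rw [hIfun₀]
    refine integrable_toReal_of_lintegral_ne_top hL₀m.aemeasurable ?_
    rw [hswap₀, hV₀]
    exact hV₀fin
  have hIint₁ : Integrable I₁ (volume : Measure ℝ) := by
    rw [hIfun₁]
    refine integrable_toReal_of_lintegral_ne_top hL₁m.aemeasurable ?_
    rw [hswap₁, hV₁]
    exact hV₁fin
  have hIval₀ : ∫ t, I₀ t ∂(volume : Measure ℝ) = ∫ x, (M x - u x) ∂ρ₀ := by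
    rw [hIfun₀]
    rw [integral_toReal hL₀m.aemeasurable (Eventually.of_forall hL₀lt)]
    rw [hswap₀, ← hT₀]
  have hIval₁ : ∫ t, I₁ t ∂(volume : Measure ℝ) = ∫ x, (u x - m x) ∂ρ₁ := by
    rw [hIfun₁]
    rw [integral_toReal hL₁m.aemeasurable (Eventually.of_forall hL₁lt)]
    rw [hswap₁, ← hT₁]
  -- final assembly
  have hPer : ∀ t : ℝ, nonlocalPer ν ρ₀ ρ₁ w₀ w₁ ε {x | t ≤ u x}
      = (w₀ / ε) * I₀ t + (w₁ / ε) * I₁ t := by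
    intro t
    rfl
  calc nonlocalTV ν ρ₀ ρ₁ w₀ w₁ ε u
      = (w₀ / ε) * ∫ x, (M x - u x) ∂ρ₀ + (w₁ / ε) * ∫ x, (u x - m x) ∂ρ₁ := rfl
    _ = (w₀ / ε) * ∫ t, I₀ t ∂(volume : Measure ℝ)
        + (w₁ / ε) * ∫ t, I₁ t ∂(volume : Measure ℝ) := by rw [hIval₀, hIval₁]
    _ = ∫ t, ((w₀ / ε) * I₀ t + (w₁ / ε) * I₁ t) ∂(volume : Measure ℝ) := by
        rw [integral_add (hIint₀.const_mul _) (hIint₁.const_mul _),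
          integral_const_mul, integral_const_mul]
    _ = ∫ t : ℝ, nonlocalPer ν ρ₀ ρ₁ w₀ w₁ ε {x | t ≤ u x} := by
        simp only [hPer]
end
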